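/- arXiv:1509.06942 — 6 statements merged into one kernel-verified Lean document; each statement's English description precedes it below -/
import Mathlib

section
/- If a finite graded poset P admits a symmetric chain decomposition, then P is strongly Sperner. -/
/-- `rk` is a rank function exhibiting the finite poset `α` as graded of rank `n`. -/
def IsGraded {α : Type*} [PartialOrder α] (rk : α → ℕ) (n : ℕ) : Prop :=
  (∀ a b : α, a ⋖ b → rk b = rk a + 1) ∧
  (∀ a : α, (∀ b, ¬ b < a) → rk a = 0) ∧
  (∀ a : α, (∀ b, ¬ a < b) → rk a = n)

/-- The number of elements of rank `k`. -/
noncomputable def rankNum {α : Type*} [Fintype α] (rk : α → ℕ) (k : ℕ) : ℕ :=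
  Nat.card {a : α // rk a = k}

/-- A symmetric chain decomposition of a graded poset of rank `n`: a partition of the
elements into saturated chains (lists of consecutive covers) such that the ranks of the
minimum and the maximum of each chain sum to `n`. -/
def IsSCD {α : Type*} [PartialOrder α] (rk : α → ℕ) (n : ℕ) (𝒞 : Set (List α)) : Prop :=
  (∀ c ∈ 𝒞, c ≠ [] ∧ c.Chain' (· ⋖ ·) ∧
    ∀ x ∈ c.head?, ∀ y ∈ c.getLast?, rk x + rk y = n) ∧
  (∀ a : α, ∃! c, c ∈ 𝒞 ∧ a ∈ c)

/-- A `k`-family: a subset containing no chain with `k+1` elements. -/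
def IsKFamily {α : Type*} [PartialOrder α] (F : Finset α) (k : ℕ) : Prop :=
  ∀ s : Finset α, s ⊆ F → IsChain (· ≤ ·) (s : Set α) → s.card ≤ k

/-- `k`-Sperner: every `k`-family has size at most the sum of the `k` largest rank numbers. -/
def IsKSperner {α : Type*} [Fintype α] [PartialOrder α] (rk : α → ℕ) (n k : ℕ) : Prop :=
  ∀ F : Finset α, IsKFamily F k →
    ∃ S ⊆ Finset.range (n + 1), S.card = min k (n + 1) ∧
      F.card ≤ ∑ i ∈ S, rankNum rk i

/-- Strongly Sperner: `k`-Sperner for all `k ≥ 1`. -/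
def StronglySperner {α : Type*} [Fintype α] [PartialOrder α] (rk : α → ℕ) (n : ℕ) : Prop :=
  ∀ k, 1 ≤ k → IsKSperner rk n k


lemma rank_getElem {α : Type*} [PartialOrder α] {rk : α → ℕ}
    (hcov : ∀ a b : α, a ⋖ b → rk b = rk a + 1) :
    ∀ (c : List α), c.Chain' (· ⋖ ·) → ∀ i (h : i < c.length) (h0 : 0 < c.length),
      rk (c.get ⟨i, h⟩) = rk (c.get ⟨0, h0⟩) + i := by
  intro c
  induction c with
  | nil => intro _ i h; simp at h
  | cons x xs ih =>
    intro hc i h h0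
    match i with
    | 0 => simp
    | j+1 =>
      have hxs : xs.Chain' (· ⋖ ·) := hc.tail
      have hlen : j < xs.length := by simpa using h
      have h0' : 0 < xs.length := by omega
      have hih := ih hxs j hlen h0'
      have hx0 : rk (xs.get ⟨0, h0'⟩) = rk x + 1 := by
        apply hcov
        cases xs with
        | nil => simp at h0'
        | cons y ys => exact (List.isChain_cons_cons.mp hc).1
      simp only [List.get_eq_getElem, List.getElem_cons_succ, List.getElem_cons_zero] at *
      omega

theorem scd_aux {α : Type*} [Fintype α] [PartialOrder α] (rk : α → ℕ) (n : ℕ)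
    (hg : (∀ a b : α, a ⋖ b → rk b = rk a + 1) ∧
      (∀ a : α, (∀ b, ¬ b < a) → rk a = 0) ∧
      (∀ a : α, (∀ b, ¬ a < b) → rk a = n))
    (𝒞 : Set (List α))
    (hscd : (∀ c ∈ 𝒞, c ≠ [] ∧ c.Chain' (· ⋖ ·) ∧
      ∀ x ∈ c.head?, ∀ y ∈ c.getLast?, rk x + rk y = n) ∧
      (∀ a : α, ∃! c, c ∈ 𝒞 ∧ a ∈ c)) :
    ∀ k, 1 ≤ k → ∀ F : Finset α,
      (∀ s : Finset α, s ⊆ F → IsChain (· ≤ ·) (s : Set α) → s.card ≤ k) →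
    ∃ S ⊆ Finset.range (n + 1), S.card = min k (n + 1) ∧
      F.card ≤ ∑ i ∈ S, Nat.card {a : α // rk a = i} := by
  classical
  obtain ⟨hcov, -, -⟩ := hg
  obtain ⟨hchains, huniq⟩ := hscd
  intro k hk F hF
  set m := min k (n+1) with hm
  set t := (n+1-m)/2 with ht
  have hmn : 1 ≤ m ∧ m ≤ n + 1 := ⟨le_min hk (by omega), min_le_right _ _⟩
  refine ⟨Finset.Icc t (t+(m-1)), ?_, ?_, ?_⟩
  · intro i hi
    simp only [Finset.mem_Icc, Finset.mem_range] at *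
    omega
  · rw [Nat.card_Icc]; omega
  · choose chainOf h1 h2 using fun a => (huniq a).exists
    have hu : ∀ (a : α) (c : List α), c ∈ 𝒞 → a ∈ c → c = chainOf a :=
      fun a c hc ha => (huniq a).unique ⟨hc, ha⟩ ⟨h1 a, h2 a⟩
    set T : Finset (List α) := Finset.image chainOf Finset.univ with hT
    have hTC : ∀ c ∈ T, c ∈ 𝒞 := by
      intro c hc
      obtain ⟨a, -, rfl⟩ := Finset.mem_image.mp hc
      exact h1 a
    have hdisj : ∀ X : Finset α, ∀ c₁ ∈ T, ∀ c₂ ∈ T, c₁ ≠ c₂ →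
        Disjoint (X ∩ c₁.toFinset) (X ∩ c₂.toFinset) := by
      intro X c₁ hc₁ c₂ hc₂ hne
      rw [Finset.disjoint_left]
      intro x hx₁ hx₂
      apply hne
      rw [hu x c₁ (hTC _ hc₁) (List.mem_toFinset.mp (Finset.mem_inter.mp hx₁).2),
        hu x c₂ (hTC _ hc₂) (List.mem_toFinset.mp (Finset.mem_inter.mp hx₂).2)]
    have hpart : ∀ X : Finset α, X.card = ∑ c ∈ T, (X ∩ c.toFinset).card := by
      intro X
      rw [← Finset.card_biUnion (hdisj X)]
      congr 1
      ext x
      simp only [Finset.mem_biUnion, Finset.mem_inter, List.mem_toFinset]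
      constructor
      · intro hx
        exact ⟨chainOf x, Finset.mem_image_of_mem _ (Finset.mem_univ x), hx, h2 x⟩
      · rintro ⟨c, -, hx, -⟩
        exact hx
    set X : Finset α := Finset.univ.filter (fun x => rk x ∈ Finset.Icc t (t+(m-1))) with hX
    have hsum : ∑ i ∈ Finset.Icc t (t+(m-1)), Nat.card {a : α // rk a = i} = X.card := by
      have hXb : X = (Finset.Icc t (t+(m-1))).biUnion
          (fun i => Finset.univ.filter (fun x => rk x = i)) := by
        ext x
        simp [hX]
      rw [hXb, Finset.card_biUnion]
      · apply Finset.sum_congr rfl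
        intro i _
        rw [Nat.card_eq_fintype_card, Fintype.card_subtype]
      · intro i _ j _ hij
        rw [Function.onFun, Finset.disjoint_left]
        intro x hx hx'
        simp only [Finset.mem_filter] at hx hx'
        exact hij (hx.2 ▸ hx'.2)
    rw [hsum, hpart F, hpart X]
    apply Finset.sum_le_sum
    intro c hc
    obtain ⟨hne, hch, hhl⟩ := hchains c (hTC c hc)
    have hℓ : 0 < c.length := List.length_pos_iff.mpr hne
    set a := rk (c.get ⟨0, hℓ⟩) with ha
    have hlast : rk (c.get ⟨c.length - 1, by omega⟩) = a + (c.length - 1) :=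
      rank_getElem hcov c hch _ _ hℓ
    have hsum2 : a + (a + (c.length - 1)) = n := by
      have h1' := hhl (c.head hne) (List.head?_eq_head hne) (c.getLast hne)
        (List.getLast?_eq_getLast hne)
      rw [List.head_eq_getElem_zero hne, List.getLast_eq_getElem] at h1'
      simp only [List.get_eq_getElem] at ha hlast
      omega
    -- A ≤ k
    have hAk : (F ∩ c.toFinset).card ≤ k := by
      apply hF _ Finset.inter_subset_left
      have hpw : c.Pairwise (· < ·) :=
        List.isChain_iff_pairwise.mp (hch.imp fun _ _ h => h.lt)
      have hget := List.pairwise_iff_get.mp hpw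
      intro x hx y hy hxy
      obtain ⟨i, rfl⟩ := List.mem_iff_get.mp
        (List.mem_toFinset.mp (Finset.mem_inter.mp (Finset.mem_coe.mp hx)).2)
      obtain ⟨j, rfl⟩ := List.mem_iff_get.mp
        (List.mem_toFinset.mp (Finset.mem_inter.mp (Finset.mem_coe.mp hy)).2)
      rcases lt_trichotomy i j with h | h | h
      · exact Or.inl (hget i j h).le
      · exact absurd (congrArg c.get h) hxy
      · exact Or.inr (hget j i h).le
    have hAl : (F ∩ c.toFinset).card ≤ c.length :=
      (Finset.card_le_card Finset.inter_subset_right).trans c.toFinset_card_le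
    -- B card
    have hinj : Set.InjOn rk c.toFinset := by
      intro x hx y hy hxy
      obtain ⟨⟨i, hi⟩, rfl⟩ := List.mem_iff_get.mp (List.mem_toFinset.mp hx)
      obtain ⟨⟨j, hj⟩, rfl⟩ := List.mem_iff_get.mp (List.mem_toFinset.mp hy)
      have e1 := rank_getElem hcov c hch i hi hℓ
      have e2 := rank_getElem hcov c hch j hj hℓ
      have : i = j := by omega
      subst this
      rfl
    have hXc : X ∩ c.toFinset = c.toFinset.filter
        (fun x => rk x ∈ Finset.Icc t (t+(m-1))) := by
      ext x
      simp only [hX, Finset.mem_inter, Finset.mem_filter, Finset.mem_univ, true_and,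
        List.mem_toFinset]
      tauto
    have hcard : (X ∩ c.toFinset).card =
        (Finset.Icc a (a + (c.length-1)) ∩ Finset.Icc t (t+(m-1))).card := by
      rw [hXc, ← Finset.card_image_of_injOn
        (hinj.mono (Finset.coe_subset.mpr (Finset.filter_subset _ _)))]
      congr 1
      ext i
      simp only [Finset.mem_image, Finset.mem_filter, List.mem_toFinset, Finset.mem_inter,
        Finset.mem_Icc]
      constructor
      · rintro ⟨x, ⟨hxc, hxS⟩, rfl⟩
        obtain ⟨⟨j, hj⟩, rfl⟩ := List.mem_iff_get.mp hxc
        have := rank_getElem hcov c hch j hj hℓ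
        exact ⟨by omega, hxS⟩
      · rintro ⟨⟨hai, hib⟩, hti⟩
        refine ⟨c.get ⟨i - a, by omega⟩, ⟨List.get_mem c _, ?_⟩, ?_⟩
        · have := rank_getElem hcov c hch (i - a) (by omega) hℓ
          constructor <;> omega
        · have := rank_getElem hcov c hch (i - a) (by omega) hℓ
          omega
    calc (F ∩ c.toFinset).card ≤ min k c.length := le_min hAk hAl
      _ ≤ (X ∩ c.toFinset).card := by
          have hii : Finset.Icc a (a + (c.length-1)) ∩ Finset.Icc t (t+(m-1)) =
              Finset.Icc (max a t) (min (a + (c.length-1)) (t+(m-1))) := by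
            ext x
            simp only [Finset.mem_inter, Finset.mem_Icc]
            omega
          rw [hcard, hii, Nat.card_Icc]
          omega


/-- If a finite graded poset admits a symmetric chain decomposition,
then it is strongly Sperner. -/
theorem stmt_5 {α : Type*} [Fintype α] [PartialOrder α] (rk : α → ℕ) (n : ℕ)
    (hg : IsGraded rk n) (𝒞 : Set (List α)) (hscd : IsSCD rk n 𝒞) :
    StronglySperner rk n := by
  exact scd_aux rk n hg 𝒞 hscd
end

section
/- If finite graded posets P and Q each admit a symmetric chain decomposition, then the direct product poset P × Q admits a symmetric chain decomposition. -/
section Aux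

variable {α β : Type*} [PartialOrder α] [PartialOrder β]

/-- Ranks increase by one along a saturated chain. -/
lemma rk_getElem {rk : α → ℕ} {n : ℕ} (hg : IsGraded rk n) {u : List α}
    (hc : u.Chain' (· ⋖ ·)) :
    ∀ j (hj : j < u.length), rk u[j] = rk (u[0]'(by omega)) + j := by
  intro j
  induction j with
  | zero => intro hj; simp
  | succ j ih =>
    intro hj
    have h1 : j < u.length - 1 := by omega
    have hcov := List.isChain_iff_getElem.1 hc j (by omega)
    rw [hg.1 _ _ hcov, ih (by omega)]
    omega

/-- A saturated chain is pairwise `<`. -/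
lemma chain_pairwise_lt {u : List α} (hc : u.Chain' (· ⋖ ·)) : u.Pairwise (· < ·) :=
  List.isChain_iff_pairwise.1 (hc.imp fun _ _ h => h.lt)

/-- Indices in a saturated chain are determined by the element. -/
lemma chain_index_unique {u : List α} (hc : u.Chain' (· ⋖ ·)) {j k : ℕ}
    (hj : j < u.length) (hk : k < u.length) (h : u[j] = u[k]) : j = k := by
  have hp := List.pairwise_iff_getElem.1 (chain_pairwise_lt hc)
  rcases lt_trichotomy j k with h' | h' | h'
  · exact absurd h (ne_of_lt (hp j k hj hk h'))
  · exact h'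
  · exact absurd h.symm (ne_of_lt (hp k j hk hj h'))

/-- The hook chain through row `i` of the grid `u × v`. -/
def hook (u : List α) (v : List β) (i : ℕ) (hc : i < u.length) (hd : i < v.length) :
    List (α × β) :=
  (v.take (v.length - i)).map (fun y => (u[i], y)) ++
  (u.drop (i + 1)).map (fun x => (x, v[v.length - 1 - i]'(by omega)))

lemma getLast?_take {l : List α} {k : ℕ} (hk : 0 < k) (hk' : k ≤ l.length) :
    (l.take k).getLast? = some (l[k - 1]'(by omega)) := by
  rw [List.getLast?_eq_getElem?, List.length_take, List.getElem?_take]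
  have : k ⊓ l.length = k := min_eq_left hk'
  rw [this]
  rw [if_pos (by omega), List.getElem?_eq_getElem (by omega)]

variable {u : List α} {v : List β} {i : ℕ} {hc : i < u.length} {hd : i < v.length}

lemma head?_hook : (hook u v i hc hd).head? = some (u[i], v[0]'(by omega)) := by
  rw [hook, List.head?_append, List.head?_map, List.head?_take, if_neg (by omega),
    List.head?_eq_getElem?, List.getElem?_eq_getElem (by omega)]
  rfl

lemma getLast?_hook :
    (hook u v i hc hd).getLast? =
      some (u[u.length - 1]'(by omega), v[v.length - 1 - i]'(by omega)) := by
  rw [hook, List.getLast?_append, List.getLast?_map]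
  by_cases h : i + 1 < u.length
  · rw [List.getLast?_eq_getElem?, List.length_drop, List.getElem?_drop,
      List.getElem?_eq_getElem (by omega)]
    have : i + 1 + (u.length - (i + 1) - 1) = u.length - 1 := by omega
    simp [this]
  · have : u.drop (i + 1) = [] := List.drop_eq_nil_of_le (by omega)
    rw [this]
    simp only [List.getLast?_nil, Option.map_none, Option.none_or]
    rw [List.getLast?_map, getLast?_take (by omega) (by omega)]
    have hi : i = u.length - 1 := by omega
    subst hi
    rw [Option.map_some]
    have h2 : v.length - (u.length - 1) - 1 = v.length - 1 - (u.length - 1) := by omega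
    simp_rw [h2]

lemma mem_hook {x : α} {y : β} :
    (x, y) ∈ hook u v i hc hd ↔
      (x = u[i] ∧ ∃ k, ∃ hk : k < v.length, k < v.length - i ∧ y = v[k]) ∨
      ((∃ j, ∃ hj : j < u.length, i < j ∧ x = u[j]) ∧
        y = v[v.length - 1 - i]'(by omega)) := by
  rw [hook, List.mem_append]
  constructor
  · rintro (h | h)
    · rcases List.mem_map.1 h with ⟨y', hy', heq⟩
      obtain ⟨k, hk, rfl⟩ := List.mem_iff_getElem.1 hy'
      rw [List.length_take] at hk
      have hk2 : k < v.length - i := lt_of_lt_of_le hk (min_le_left _ _)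
      rw [List.getElem_take] at heq
      rw [Prod.mk.injEq] at heq
      exact Or.inl ⟨heq.1.symm, k, by omega, hk2, heq.2.symm⟩
    · rcases List.mem_map.1 h with ⟨x', hx', heq⟩
      obtain ⟨j, hj, rfl⟩ := List.mem_iff_getElem.1 hx'
      rw [List.length_drop] at hj
      rw [List.getElem_drop] at heq
      rw [Prod.mk.injEq] at heq
      exact Or.inr ⟨⟨i + 1 + j, by omega, by omega, heq.1.symm⟩, heq.2.symm⟩
  · rintro (⟨rfl, k, hk, hk2, rfl⟩ | ⟨⟨j, hj, hij, rfl⟩, rfl⟩)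
    · refine Or.inl (List.mem_map.2 ⟨v[k], ?_, rfl⟩)
      exact List.mem_iff_getElem.2 ⟨k, by rw [List.length_take]; omega,
        List.getElem_take⟩
    · refine Or.inr (List.mem_map.2 ⟨u[j], ?_, rfl⟩)
      refine List.mem_iff_getElem.2 ⟨j - (i + 1), by rw [List.length_drop]; omega, ?_⟩
      rw [List.getElem_drop]
      congr 1
      omega

lemma chain'_hook (hcc : u.Chain' (· ⋖ ·)) (hdc : v.Chain' (· ⋖ ·)) :
    (hook u v i hc hd).Chain' (· ⋖ ·) := by
  rw [hook]; unfold List.Chain'; rw [List.isChain_append]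
  refine ⟨?_, ?_, ?_⟩
  · rw [List.isChain_map]
    exact (hdc.take _).imp fun _ _ h => Prod.mk_covBy_mk_iff_right.2 h
  · rw [List.isChain_map]
    exact (hcc.drop _).imp fun _ _ h => Prod.mk_covBy_mk_iff_left.2 h
  · intro p hp q hq
    rw [List.getLast?_map, getLast?_take (by omega) (by omega)] at hp
    simp only [Option.mem_def, Option.map_some, Option.some.injEq] at hp
    rw [List.head?_map] at hq
    by_cases h : i + 1 < u.length
    · rw [List.head?_drop, List.getElem?_eq_getElem h] at hq
      simp only [Option.mem_def, Option.map_some, Option.some.injEq] at hq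
      subst hp hq
      have hcov := List.isChain_iff_getElem.1 hcc i (by omega)
      have : v.length - i - 1 = v.length - 1 - i := by omega
      simp only [this]
      exact Prod.mk_covBy_mk_iff_left.2 hcov
    · rw [List.head?_drop, List.getElem?_eq_none (by omega)] at hq
      simp at hq

end Aux

/-- If two finite graded posets each admit a symmetric chain decomposition, then their
direct product (ordered componentwise, graded by the sum of the rank functions) admits a
symmetric chain decomposition. -/
theorem stmt_6 {α β : Type*} [Fintype α] [PartialOrder α] [Fintype β] [PartialOrder β]
    (rk₁ : α → ℕ) (m : ℕ) (rk₂ : β → ℕ) (n : ℕ)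
    (hg₁ : IsGraded rk₁ m) (hg₂ : IsGraded rk₂ n)
    (h₁ : ∃ 𝒞 : Set (List α), IsSCD rk₁ m 𝒞)
    (h₂ : ∃ 𝒞 : Set (List β), IsSCD rk₂ n 𝒞) :
    ∃ 𝒞 : Set (List (α × β)), IsSCD (fun p => rk₁ p.1 + rk₂ p.2) (m + n) 𝒞 := by
  obtain ⟨C, hC1, hC2⟩ := h₁
  obtain ⟨D, hD1, hD2⟩ := h₂
  refine ⟨{L | ∃ u ∈ C, ∃ v ∈ D, ∃ i, ∃ hc : i < u.length, ∃ hd : i < v.length,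
    L = hook u v i hc hd}, ?_, ?_⟩
  · rintro L ⟨u, hcC, v, hdD, i, hic, hid, rfl⟩
    obtain ⟨hcne, hcchain, hcrk⟩ := hC1 u hcC
    obtain ⟨hdne, hdchain, hdrk⟩ := hD1 v hdD
    refine ⟨?_, chain'_hook hcchain hdchain, ?_⟩
    · intro h
      have := head?_hook (u := u) (v := v) (hc := hic) (hd := hid)
      rw [h] at this
      simp at this
    · intro p hp q hq
      rw [head?_hook] at hp
      rw [getLast?_hook] at hq
      simp only [Option.mem_def, Option.some.injEq] at hp hq
      subst hp hq
      -- rank bookkeeping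
      have hc0 : (0:ℕ) < u.length := by omega
      have hd0 : (0:ℕ) < v.length := by omega
      have hrkc : ∀ j (hj : j < u.length), rk₁ u[j] = rk₁ (u[0]'hc0) + j :=
        rk_getElem hg₁ hcchain
      have hrkd : ∀ j (hj : j < v.length), rk₂ v[j] = rk₂ (v[0]'hd0) + j :=
        rk_getElem hg₂ hdchain
      have hcm : rk₁ (u[0]'hc0) + rk₁ (u[u.length - 1]'(by omega)) = m := by
        apply hcrk
        · rw [List.head?_eq_getElem?, List.getElem?_eq_getElem hc0]; rfl
        · rw [List.getLast?_eq_getElem?, List.getElem?_eq_getElem (by omega)]; rfl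
      have hdn : rk₂ (v[0]'hd0) + rk₂ (v[v.length - 1]'(by omega)) = n := by
        apply hdrk
        · rw [List.head?_eq_getElem?, List.getElem?_eq_getElem hd0]; rfl
        · rw [List.getLast?_eq_getElem?, List.getElem?_eq_getElem (by omega)]; rfl
      simp only
      rw [hrkc i hic, hrkc (u.length - 1) (by omega), hrkd 0 hd0,
        hrkd (v.length - 1 - i) (by omega)]
      rw [hrkc (u.length - 1) (by omega)] at hcm
      rw [hrkd (v.length - 1) (by omega)] at hdn
      omega
  · rintro ⟨x, y⟩
    obtain ⟨u, ⟨hcC, hxc⟩, hcuniq⟩ := hC2 x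
    obtain ⟨v, ⟨hdD, hyd⟩, hduniq⟩ := hD2 y
    obtain ⟨hcne, hcchain, -⟩ := hC1 u hcC
    obtain ⟨hdne, hdchain, -⟩ := hD1 v hdD
    obtain ⟨j, hj, rfl⟩ := List.mem_iff_getElem.1 hxc
    obtain ⟨k, hk, rfl⟩ := List.mem_iff_getElem.1 hyd
    obtain ⟨i, hidef⟩ : ∃ i, i = min j (v.length - 1 - k) := ⟨_, rfl⟩
    have hic : i < u.length := by omega
    have hid : i < v.length := by omega
    refine ⟨hook u v i hic hid, ⟨⟨u, hcC, v, hdD, i, hic, hid, rfl⟩, ?_⟩, ?_⟩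
    · rw [mem_hook]
      rcases le_or_gt j (v.length - 1 - k) with h | h
      · have hij : i = j := by omega
        subst hij
        exact Or.inl ⟨rfl, k, hk, by omega, rfl⟩
      · have hik : i = v.length - 1 - k := by omega
        refine Or.inr ⟨⟨j, hj, by omega, rfl⟩, ?_⟩
        congr 1
        omega
    · rintro L ⟨⟨u', hc'C, v', hd'D, i', hic', hid', rfl⟩, hmem⟩
      have hxc' : u[j] ∈ u' := by
        rcases mem_hook.1 hmem with ⟨h, -⟩ | ⟨⟨j', hj', -, h⟩, -⟩
        · rw [h]; exact List.getElem_mem _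
        · rw [h]; exact List.getElem_mem _
      have hyd' : v[k] ∈ v' := by
        rcases mem_hook.1 hmem with ⟨-, k', hk', -, h⟩ | ⟨-, h⟩
        · rw [h]; exact List.getElem_mem _
        · rw [h]; exact List.getElem_mem _
      have hcc : u' = u := hcuniq u' ⟨hc'C, hxc'⟩
      have hdd : v' = v := hduniq v' ⟨hd'D, hyd'⟩
      subst hcc hdd
      have hii : i' = i := by
        rcases mem_hook.1 hmem with ⟨h, k', hk', hk'2, h2⟩ | ⟨⟨j', hj', hij', h⟩, h2⟩
        · have : j = i' := chain_index_unique hcchain hj hic' h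
          have : k = k' := chain_index_unique hdchain hk hk' h2
          omega
        · have : j = j' := chain_index_unique hcchain hj hj' h
          have : k = v'.length - 1 - i' := chain_index_unique hdchain hk (by omega) h2
          omega
      subst hii
      rfl
end

section
/- Every finite Boolean lattice (the poset of subsets of a finite set, ordered by inclusion) admits a symmetric chain decomposition. -/
section Aux

variable {α : Type*} [DecidableEq α]

/-- A symmetric chain decomposition of the powerset of `S`. -/
def GoodSCD (S : Finset α) (𝒞 : Set (List (Finset α))) : Prop :=
  (∀ c ∈ 𝒞, c ≠ [] ∧ c.Chain' (· ⋖ ·) ∧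
    ∀ x ∈ c.head?, ∀ y ∈ c.getLast?, x.card + y.card = S.card) ∧
  (∀ c ∈ 𝒞, ∀ a ∈ c, a ⊆ S) ∧
  (∀ a : Finset α, a ⊆ S → ∃! c, c ∈ 𝒞 ∧ a ∈ c)

omit [DecidableEq α] in
lemma chain_nodup {c : List (Finset α)} (h : c.Chain' (· ⋖ ·)) : c.Nodup := by
  have h2 : c.Chain' (· < ·) := h.imp (fun a b hab => hab.lt)
  have h3 : c.Pairwise (· < ·) := List.isChain_iff_pairwise.mp h2
  exact h3.imp (fun hab => ne_of_lt hab)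

lemma last_not_mem_dropLast {β : Type*} {c : List β} (hne : c ≠ []) (hnd : c.Nodup) :
    c.getLast hne ∉ c.dropLast := by
  have hsplit := List.dropLast_append_getLast hne
  rw [← hsplit] at hnd
  obtain ⟨-, -, hdisj⟩ := List.nodup_append'.mp hnd
  intro hmem
  exact hdisj hmem (List.mem_singleton_self _)

lemma mem_iff_dropLast_or_last {β : Type*} {c : List β} (hne : c ≠ []) (a : β) :
    a ∈ c ↔ a ∈ c.dropLast ∨ a = c.getLast hne := by
  conv_lhs => rw [← List.dropLast_append_getLast hne]
  simp [List.mem_append]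

lemma cov_insert {x : α} {a b : Finset α} (hx : x ∉ b) (h : a ⋖ b) :
    insert x a ⋖ insert x b := by
  obtain ⟨y, hy, rfl⟩ := Finset.covBy_iff_exists_insert.mp h
  refine Finset.covBy_iff_exists_insert.mpr ⟨y, ?_, ?_⟩
  · simp only [Finset.mem_insert, not_or]
    refine ⟨?_, hy⟩
    rintro rfl
    exact hx (Finset.mem_insert_self _ _)
  · rw [Finset.insert_comm]

lemma card_of_covBy {a b : Finset α} (h : a ⋖ b) : b.card = a.card + 1 := by
  obtain ⟨y, hy, rfl⟩ := Finset.covBy_iff_exists_insert.mp h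
  exact Finset.card_insert_of_notMem hy

lemma chain'_insert_map (x : α) {l : List (Finset α)} (hl : ∀ s ∈ l, x ∉ s)
    (h : l.Chain' (· ⋖ ·)) : (l.map (insert x)).Chain' (· ⋖ ·) := by
  induction l with
  | nil => exact List.isChain_nil
  | cons a t ih =>
    cases t with
    | nil => exact List.isChain_singleton _
    | cons b l' =>
      simp only [List.Chain', List.isChain_cons_cons] at h
      simp only [List.map_cons, List.Chain', List.isChain_cons_cons]
      refine ⟨cov_insert (hl b (by simp)) h.1, ?_⟩
      have := ih (fun s hs => hl s (List.mem_cons_of_mem _ hs)) h.2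
      simpa [List.Chain'] using this

lemma goodSCD_exists (S : Finset α) : ∃ 𝒞, GoodSCD S 𝒞 := by
  induction S using Finset.induction_on with
  | empty =>
    refine ⟨{[∅]}, ?_, ?_, ?_⟩
    · rintro c rfl
      refine ⟨by simp, List.isChain_singleton _, ?_⟩
      intro u hu v hv
      simp only [List.head?_cons, Option.mem_def, Option.some.injEq] at hu hv
      subst hu
      simp only [List.getLast?_singleton, Option.mem_def, Option.some.injEq] at hv
      subst hv
      simp
    · rintro c rfl a ha
      simp only [List.mem_singleton] at ha
      subst ha; exact Finset.Subset.refl _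
    · intro a ha
      have : a = ∅ := Finset.subset_empty.mp ha
      subst this
      refine ⟨[∅], ⟨rfl, by simp⟩, ?_⟩
      rintro c ⟨rfl, -⟩; rfl
  | @insert x S hxS ih =>
    obtain ⟨𝒞, h1, h2, h3⟩ := ih
    -- elements of chains in 𝒞 do not contain x
    have hnx : ∀ c ∈ 𝒞, ∀ a ∈ c, x ∉ a := fun c hc a ha hxa => hxS (h2 c hc a ha hxa)
    set 𝒞' : Set (List (Finset α)) :=
      {l | ∃ c ∈ 𝒞, ∃ hc : c ≠ [], l = c ++ [insert x (c.getLast hc)]} ∪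
      {l | ∃ c ∈ 𝒞, c.dropLast ≠ [] ∧ l = c.dropLast.map (insert x ·)} with h𝒞'
    refine ⟨𝒞', ?_, ?_, ?_⟩
    · -- chain conditions
      rintro l (⟨c, hc, hne, rfl⟩ | ⟨c, hc1, hdn, rfl⟩)
      · obtain ⟨-, hch, hsum⟩ := h1 c hc
        have hxl : x ∉ c.getLast hne := hnx c hc _ (List.getLast_mem hne)
        have hcov : c.getLast hne ⋖ insert x (c.getLast hne) :=
          Finset.covBy_iff_exists_insert.mpr ⟨x, hxl, rfl⟩
        refine ⟨by simp, ?_, ?_⟩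
        · refine List.isChain_append.mpr ⟨hch, by simp, ?_⟩
          intro u hu v hv
          rw [List.getLast?_eq_getLast hne] at hu
          simp only [Option.mem_def, Option.some.injEq] at hu hv
          rw [List.head?_cons, Option.some.injEq] at hv
          subst hu; subst hv
          exact hcov
        · intro u hu v hv
          rw [List.getLast?_concat] at hv
          simp only [Option.mem_def, Option.some.injEq] at hv
          subst hv
          have hh : (c ++ [insert x (c.getLast hne)]).head? = some (c.head hne) := by
            rw [List.head?_append, List.head?_eq_head hne]; rfl
          rw [hh, Option.mem_def, Option.some.injEq] at hu
          subst hu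
          have hsum' := hsum _ (by rw [List.head?_eq_head hne]; rfl)
            _ (by rw [List.getLast?_eq_getLast hne]; rfl)
          rw [Finset.card_insert_of_notMem hxl, Finset.card_insert_of_notMem hxS]
          omega
      · obtain ⟨hne, hch, hsum⟩ := h1 c hc1
        have hsplit := List.dropLast_append_getLast hne
        have hchsplit : (c.dropLast ++ [c.getLast hne]).Chain' (· ⋖ ·) := by
          rw [hsplit]; exact hch
        obtain ⟨hchd, -, hlink⟩ := List.isChain_append.mp hchsplit
        refine ⟨by simp only [ne_eq, List.map_eq_nil_iff]; exact hdn, ?_, ?_⟩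
        · exact chain'_insert_map x
            (fun s hs => hnx c hc1 s (List.mem_of_mem_dropLast hs)) hchd
        · intro u hu v hv
          rw [List.getLast?_map, List.getLast?_eq_getLast hdn] at hv
          simp only [Option.map_some, Option.mem_def, Option.some.injEq] at hv
          subst hv
          have hhd : (c.dropLast.map (insert x ·)).head? =
              some (insert x (c.dropLast.head hdn)) := by
            rw [List.head?_map, List.head?_eq_head hdn]; rfl
          rw [hhd, Option.mem_def, Option.some.injEq] at hu
          subst hu
          -- head of dropLast = head of c
          have hheads : c.dropLast.head hdn = c.head hne := by
            have : (c.dropLast ++ [c.getLast hne]).head? = c.head? := by rw [hsplit]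
            rw [List.head?_append, List.head?_eq_head hdn, List.head?_eq_head hne] at this
            simpa using this
          have hcov2 : c.dropLast.getLast hdn ⋖ c.getLast hne := by
            refine hlink _ ?_ _ (by simp)
            rw [List.getLast?_eq_getLast hdn]; rfl
          have hcard2 := card_of_covBy hcov2
          have hsum' := hsum _ (by rw [List.head?_eq_head hne]; rfl)
            _ (by rw [List.getLast?_eq_getLast hne]; rfl)
          have hx1 : x ∉ c.dropLast.head hdn :=
            hnx c hc1 _ (List.mem_of_mem_dropLast (List.head_mem hdn))
          have hx2 : x ∉ c.dropLast.getLast hdn :=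
            hnx c hc1 _ (List.mem_of_mem_dropLast (List.getLast_mem hdn))
          rw [Finset.card_insert_of_notMem hx1, Finset.card_insert_of_notMem hx2,
            Finset.card_insert_of_notMem hxS, hheads]
          omega
    · -- subsets
      rintro l (⟨c, hc, hne, rfl⟩ | ⟨c, hc, hdn, rfl⟩) a ha
      · rw [List.mem_append, List.mem_singleton] at ha
        rcases ha with ha | rfl
        · exact (h2 c hc a ha).trans (Finset.subset_insert _ _)
        · exact Finset.insert_subset_insert _ (h2 c hc _ (List.getLast_mem hne))
      · obtain ⟨s, hs, rfl⟩ := List.mem_map.mp ha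
        exact Finset.insert_subset_insert _ (h2 c hc s (List.mem_of_mem_dropLast hs))
    · -- unique chain through each element
      intro a haS
      by_cases hxa : x ∈ a
      · -- a contains x
        set b := a.erase x with hb
        have hba : insert x b = a := Finset.insert_erase hxa
        have hbS : b ⊆ S := by
          intro y hy
          have hyS := haS (Finset.mem_of_mem_erase hy)
          rcases Finset.mem_insert.mp hyS with rfl | hyS
          · exact absurd rfl (Finset.ne_of_mem_erase hy)
          · exact hyS
        obtain ⟨c₀, ⟨hc₀, hbc₀⟩, huniq⟩ := h3 b hbS
        obtain ⟨hne₀, hch₀, -⟩ := h1 c₀ hc₀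
        have hnd₀ := chain_nodup hch₀
        -- helper: any l ∈ 𝒞' containing a comes from c₀
        have key : ∀ l, l ∈ 𝒞' → a ∈ l →
            (b = c₀.getLast hne₀ ∧ l = c₀ ++ [insert x (c₀.getLast hne₀)]) ∨
            (b ∈ c₀.dropLast ∧ l = c₀.dropLast.map (insert x ·)) := by
          rintro l (⟨c, hc, hne, rfl⟩ | ⟨c, hc, hdn, rfl⟩) ha
          · rw [List.mem_append, List.mem_singleton] at ha
            rcases ha with ha | ha
            · exact absurd hxa (hnx c hc a ha)
            · have hxl : x ∉ c.getLast hne := hnx c hc _ (List.getLast_mem hne)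
              have hbl : b = c.getLast hne := by
                rw [hb, ha, Finset.erase_insert hxl]
              have hbc : b ∈ c := hbl ▸ List.getLast_mem hne
              have hcc : c = c₀ := huniq c ⟨hc, hbc⟩
              subst hcc
              left
              exact ⟨hbl, rfl⟩
          · obtain ⟨s, hs, hsa⟩ := List.mem_map.mp ha
            have hxs : x ∉ s := hnx c hc s (List.mem_of_mem_dropLast hs)
            have hbs : b = s := by
              rw [hb, ← hsa, Finset.erase_insert hxs]
            have hbc : b ∈ c := hbs ▸ List.mem_of_mem_dropLast hs
            have hcc : c = c₀ := huniq c ⟨hc, hbc⟩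
            subst hcc
            right
            exact ⟨hbs ▸ hs, rfl⟩
        have hsplitmem := (mem_iff_dropLast_or_last hne₀ b).mp hbc₀
        by_cases hlast : b = c₀.getLast hne₀
        · have hnd : b ∉ c₀.dropLast := hlast ▸ last_not_mem_dropLast hne₀ hnd₀
          refine ⟨c₀ ++ [insert x (c₀.getLast hne₀)], ⟨Or.inl ⟨c₀, hc₀, hne₀, rfl⟩, ?_⟩, ?_⟩
          · rw [List.mem_append, List.mem_singleton]
            right
            rw [← hlast, hba]
          · intro l hl
            rcases key l hl.1 hl.2 with ⟨-, rfl⟩ | ⟨hmem, -⟩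
            · rfl
            · exact absurd hmem hnd
        · have hmem : b ∈ c₀.dropLast := hsplitmem.resolve_right hlast
          have hdn₀ : c₀.dropLast ≠ [] := List.ne_nil_of_mem hmem
          refine ⟨c₀.dropLast.map (insert x ·), ⟨Or.inr ⟨c₀, hc₀, hdn₀, rfl⟩, ?_⟩, ?_⟩
          · exact List.mem_map.mpr ⟨b, hmem, hba⟩
          · intro l hl
            rcases key l hl.1 hl.2 with ⟨hlast', -⟩ | ⟨-, rfl⟩
            · exact absurd hlast' hlast
            · rfl
      · -- x ∉ a
        have haS' : a ⊆ S := by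
          intro y hy
          rcases Finset.mem_insert.mp (haS hy) with rfl | h
          · exact absurd hy hxa
          · exact h
        obtain ⟨c₀, ⟨hc₀, hac₀⟩, huniq⟩ := h3 a haS'
        obtain ⟨hne₀, -, -⟩ := h1 c₀ hc₀
        refine ⟨c₀ ++ [insert x (c₀.getLast hne₀)], ⟨Or.inl ⟨c₀, hc₀, hne₀, rfl⟩, ?_⟩, ?_⟩
        · rw [List.mem_append]; exact Or.inl hac₀
        · rintro l ⟨(⟨c, hc, hne, rfl⟩ | ⟨c, hc, hdn, rfl⟩), hal⟩
          · rw [List.mem_append, List.mem_singleton] at hal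
            rcases hal with hal | hal
            · have : c = c₀ := huniq c ⟨hc, hal⟩
              subst this; rfl
            · exact absurd (hal ▸ Finset.mem_insert_self x _) hxa
          · obtain ⟨s, -, hsa⟩ := List.mem_map.mp hal
            exact absurd (hsa ▸ Finset.mem_insert_self x s) hxa

end Aux

/-- Every finite Boolean lattice (the poset of subsets of a finite set ordered by inclusion,
graded by cardinality) admits a symmetric chain decomposition. -/
theorem stmt_7 (α : Type*) [Fintype α] [DecidableEq α] :
    ∃ 𝒞 : Set (List (Finset α)),
      IsSCD (fun s : Finset α => s.card) (Fintype.card α) 𝒞 := by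
  obtain ⟨𝒞, h1, -, h3⟩ := goodSCD_exists (Finset.univ : Finset α)
  refine ⟨𝒞, ?_, ?_⟩
  · intro c hc
    obtain ⟨hne, hch, hsum⟩ := h1 c hc
    exact ⟨hne, hch, by simpa [Finset.card_univ] using hsum⟩
  · intro a
    exact h3 a (Finset.subset_univ a)
end

section
/- If a finite graded poset P of rank n admits a symmetric Boolean decomposition, then its rank-generating polynomial is γ-nonnegative; moreover the j-th γ-coefficient equals the number of parts of the decomposition of cardinality 2^{n-2j}. -/
/-- A symmetric Boolean decomposition of a graded poset of rank `n`: a partition of the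
elements into induced subposets, each isomorphic (as a poset, with cover relations agreeing
with those of the ambient poset) to a Boolean lattice of rank `n - 2j`, whose minimum has
rank `j` and whose maximum has rank `n - j`. -/
def IsSymmBoolDecomp {α : Type*} [PartialOrder α] (rk : α → ℕ) (n : ℕ)
    (𝒟 : Set (Set α)) : Prop :=
  (∀ a : α, ∃! B, B ∈ 𝒟 ∧ a ∈ B) ∧
  ∀ B ∈ 𝒟, ∃ j : ℕ, 2 * j ≤ n ∧ ∃ e : B ≃ Finset (Fin (n - 2 * j)),
    (∀ x y : B, (x : α) ≤ (y : α) ↔ e x ⊆ e y) ∧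
    (∀ x y : B, e x ⊆ e y → (e y).card = (e x).card + 1 → (x : α) ⋖ (y : α)) ∧
    (∀ x : B, rk (x : α) = j + (e x).card)

open Polynomial

/-- If a finite graded poset of rank `n` admits a symmetric Boolean decomposition, then its
rank-generating polynomial is γ-nonnegative; moreover the `j`-th γ-coefficient equals the
number of parts of the decomposition of cardinality `2^{n-2j}`. -/
theorem stmt_10 {α : Type*} [Fintype α] [PartialOrder α] (rk : α → ℕ) (n : ℕ)
    (hg : IsGraded rk n) (𝒟 : Set (Set α)) (h : IsSymmBoolDecomp rk n 𝒟) :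
    (∑ k ∈ Finset.range (n + 1),
        (Polynomial.C (rankNum rk k) * Polynomial.X ^ k : Polynomial ℕ)) =
      ∑ j ∈ Finset.range (n / 2 + 1),
        Polynomial.C (Nat.card {B : Set α // B ∈ 𝒟 ∧ Nat.card B = 2 ^ (n - 2 * j)}) *
          Polynomial.X ^ j * (1 + Polynomial.X) ^ (n - 2 * j) := by
  classical
  obtain ⟨huniq, hstruct⟩ := h
  choose φ hφ1 hφ2 using huniq
  set J : Set α → ℕ := fun B => if hB : B ∈ 𝒟 then (hstruct B hB).choose else 0 with hJdef
  have hJ_spec : ∀ B (hB : B ∈ 𝒟), 2 * J B ≤ n ∧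
      ∃ e : B ≃ Finset (Fin (n - 2 * J B)), ∀ x : B, rk (x : α) = J B + (e x).card := by
    intro B hB
    have hJB : J B = (hstruct B hB).choose := dif_pos hB
    rw [hJB]
    obtain ⟨h1, e, _, _, he⟩ := (hstruct B hB).choose_spec
    exact ⟨h1, e, he⟩
  have hJ_le : ∀ B ∈ 𝒟, 2 * J B ≤ n := fun B hB => (hJ_spec B hB).1
  have hJ_e : ∀ B (hB : B ∈ 𝒟), ∃ e : B ≃ Finset (Fin (n - 2 * J B)),
      ∀ x : B, rk (x : α) = J B + (e x).card := fun B hB => (hJ_spec B hB).2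
  -- binomial identity
  have hbin : ∀ m : ℕ,
      ∑ t : Finset (Fin m), (X : Polynomial ℕ) ^ t.card = (1 + X) ^ m := by
    intro m
    have := Finset.prod_add (fun _ : Fin m => (X : Polynomial ℕ)) (fun _ => 1) Finset.univ
    simp only [Finset.powerset_univ] at this
    rw [add_comm]
    simpa using this.symm
  -- cardinality of each block
  have hcard : ∀ B ∈ 𝒟, Nat.card B = 2 ^ (n - 2 * J B) := by
    intro B hB
    obtain ⟨e, -⟩ := hJ_e B hB
    rw [Nat.card_congr e]
    simp [Nat.card_eq_fintype_card]
  -- rank bound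
  have hrk_le : ∀ a : α, rk a ≤ n := by
    intro a
    obtain ⟨e, he⟩ := hJ_e (φ a) (hφ1 a).1
    have h1 : rk a = J (φ a) + (e ⟨a, (hφ1 a).2⟩).card := he ⟨a, (hφ1 a).2⟩
    have h2 : (e ⟨a, (hφ1 a).2⟩).card ≤ n - 2 * J (φ a) :=
      le_trans (Finset.card_le_univ _) (by simp)
    have := hJ_le (φ a) (hφ1 a).1
    omega
  -- step 1 : LHS = ∑_{a} X^{rk a}
  have step1 : (∑ k ∈ Finset.range (n + 1),
      (Polynomial.C (rankNum rk k) * Polynomial.X ^ k : Polynomial ℕ)) =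
      ∑ a : α, (X : Polynomial ℕ) ^ rk a := by
    rw [← Finset.sum_fiberwise_of_maps_to (g := rk) (t := Finset.range (n+1))
      (fun a _ => Finset.mem_range.mpr (Nat.lt_succ_of_le (hrk_le a)))
      (fun a => (X : Polynomial ℕ) ^ rk a)]
    refine Finset.sum_congr rfl fun k _ => ?_
    rw [Finset.sum_congr rfl (fun a ha => by
      rw [(Finset.mem_filter.mp ha).2]), Finset.sum_const, nsmul_eq_mul]
    congr 1
    rw [rankNum, Nat.card_eq_fintype_card, Fintype.card_subtype]
    simp
  -- step 2 : group elements by blocks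
  set DF : Finset (Set α) := Set.Finite.toFinset (Set.toFinite 𝒟) with hDF
  have hmemDF : ∀ B, B ∈ DF ↔ B ∈ 𝒟 := fun B => Set.Finite.mem_toFinset _
  have step2 : ∑ a : α, (X : Polynomial ℕ) ^ rk a =
      ∑ B ∈ DF, ∑ a ∈ Finset.univ.filter (fun a => φ a = B), (X : Polynomial ℕ) ^ rk a := by
    rw [Finset.sum_fiberwise_of_maps_to (fun a _ => (hmemDF _).mpr (hφ1 a).1)]
  -- step 3 : each block contributes X^j (1+X)^{n-2j}
  have step3 : ∀ B ∈ DF, ∑ a ∈ Finset.univ.filter (fun a => φ a = B),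
      (X : Polynomial ℕ) ^ rk a = X ^ J B * (1 + X) ^ (n - 2 * J B) := by
    intro B hB
    have hB' := (hmemDF B).mp hB
    have hfil : Finset.univ.filter (fun a => φ a = B) = Set.toFinset B := by
      ext a
      simp only [Finset.mem_filter, Finset.mem_univ, true_and, Set.mem_toFinset]
      constructor
      · rintro rfl; exact (hφ1 a).2
      · intro ha; exact (hφ2 a B ⟨hB', ha⟩).symm
    rw [hfil, ← Finset.sum_set_coe]
    obtain ⟨e, he⟩ := hJ_e B hB'
    rw [Fintype.sum_equiv e _ (fun S => (X : Polynomial ℕ) ^ (J B + S.card))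
      (fun x => by rw [he x])]
    simp_rw [pow_add]
    rw [← Finset.mul_sum, hbin]
  rw [step1, step2, Finset.sum_congr rfl step3]
  -- step 4 : group blocks by J value
  rw [← Finset.sum_fiberwise_of_maps_to (g := J) (t := Finset.range (n / 2 + 1))
    (fun B hB => Finset.mem_range.mpr (by
      have := hJ_le B ((hmemDF B).mp hB); omega))
    (fun B => (X : Polynomial ℕ) ^ J B * (1 + X) ^ (n - 2 * J B))]
  refine Finset.sum_congr rfl fun j hj => ?_
  have hjn : 2 * j ≤ n := by
    have := Finset.mem_range.mp hj
    omega
  rw [Finset.sum_congr rfl (fun B hB => by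
      rw [(Finset.mem_filter.mp hB).2]), Finset.sum_const, nsmul_eq_mul]
  -- count
  have hset : {B : Set α | B ∈ 𝒟 ∧ Nat.card B = 2 ^ (n - 2 * j)} =
      ↑(DF.filter (fun B => J B = j)) := by
    ext B
    simp only [Set.mem_setOf_eq, Finset.coe_filter, hmemDF, Set.mem_setOf_eq]
    constructor
    · rintro ⟨hB, hc⟩
      refine ⟨hB, ?_⟩
      have := hcard B hB
      rw [this] at hc
      have hexp : n - 2 * J B = n - 2 * j := Nat.pow_right_injective (by norm_num) hc
      have := hJ_le B hB
      omega
    · rintro ⟨hB, rfl⟩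
      exact ⟨hB, hcard B hB⟩
  have hcount : Nat.card {B : Set α // B ∈ 𝒟 ∧ Nat.card B = 2 ^ (n - 2 * j)} =
      (DF.filter (fun B => J B = j)).card := by
    calc Nat.card {B : Set α // B ∈ 𝒟 ∧ Nat.card B = 2 ^ (n - 2 * j)}
        = Set.ncard {B : Set α | B ∈ 𝒟 ∧ Nat.card B = 2 ^ (n - 2 * j)} :=
          Nat.card_coe_set_eq _
      _ = _ := by rw [hset, Set.ncard_coe_finset]
  rw [mul_assoc, hcount]
  congr 1
end

section
/- If P is a finite graded, rank-symmetric, rank-unimodal poset satisfying the normalized matching property, then P admits a symmetric chain decomposition. -/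
set_option linter.unusedVariables false
set_option linter.unusedSectionVars false
set_option maxHeartbeats 1000000

open Function List
section ChainLemmas
variable {γ : Type*} [PartialOrder γ]

lemma covChain_pairwise {l : List γ} (h : l.Chain' (· ⋖ ·)) : l.Pairwise (· < ·) :=
  List.isChain_iff_pairwise.mp (h.imp fun a b hab => hab.lt)

lemma pairwise_head_le {l : List γ} (hp : l.Pairwise (· < ·)) {x h : γ}
    (hx : x ∈ l) (hh : l.head? = some h) : h ≤ x := by
  cases l with
  | nil => simp at hx
  | cons a t =>
    obtain rfl : a = h := by simpa using hh
    rcases List.mem_cons.mp hx with rfl | hx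
    · exact le_refl _
    · exact (List.rel_of_pairwise_cons hp hx).le

lemma pairwise_le_getLast {l : List γ} (hp : l.Pairwise (· < ·)) {x g : γ}
    (hx : x ∈ l) (hg : l.getLast? = some g) : x ≤ g := by
  induction l with
  | nil => simp at hx
  | cons a t IH =>
    cases t with
    | nil =>
      obtain rfl : x = a := by simpa using hx
      obtain rfl : x = g := by simpa using hg
      exact le_refl _
    | cons b t' =>
      rw [List.getLast?_cons_cons] at hg
      rcases List.mem_cons.mp hx with rfl | hx
      · have hgm : g ∈ b :: t' := by
          obtain ⟨h', rfl⟩ := List.mem_getLast?_eq_getLast hg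
          exact List.getLast_mem h'
        exact (List.rel_of_pairwise_cons hp hgm).le
      · exact IH hp.of_cons hx hg

/-- In a cover chain, a member whose `ρ`-value is `≤` that of the head equals the head,
provided `ρ` is strictly monotone. -/
lemma chain_head_eq {ρ : γ → ℕ} (hmono : ∀ a b : γ, a < b → ρ a < ρ b)
    {l : List γ} (hl : l.Chain' (· ⋖ ·)) {x h : γ} (hx : x ∈ l) (hh : l.head? = some h)
    (hr : ρ x ≤ ρ h) : x = h := by
  have hp := covChain_pairwise hl
  rcases eq_or_lt_of_le (pairwise_head_le hp hx hh) with h' | h'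
  · exact h'.symm
  · exact absurd (hmono _ _ h') (by omega)

lemma chain_getLast_eq {ρ : γ → ℕ} (hmono : ∀ a b : γ, a < b → ρ a < ρ b)
    {l : List γ} (hl : l.Chain' (· ⋖ ·)) {x g : γ} (hx : x ∈ l) (hg : l.getLast? = some g)
    (hr : ρ g ≤ ρ x) : x = g := by
  have hp := covChain_pairwise hl
  rcases eq_or_lt_of_le (pairwise_le_getLast hp hx hg) with h' | h'
  · exact h'
  · exact absurd (hmono _ _ h') (by omega)

end ChainLemmas

section Basics
variable {α : Type*} [PartialOrder α] {rk : α → ℕ} {n : ℕ}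

lemma lt_rk [Fintype α] (hg : IsGraded rk n) {b : α} : ∀ a, a < b → rk a < rk b := by
  induction b using WellFoundedLT.induction with
  | _ b IH =>
    intro a hab
    obtain ⟨x, hax, hxb⟩ := exists_le_covBy_of_lt hab
    have hx : rk b = rk x + 1 := hg.1 _ _ hxb
    rcases eq_or_lt_of_le hax with rfl | h
    · omega
    · have := IH x hxb.lt a h
      omega

lemma rk_le [Fintype α] (hg : IsGraded rk n) : ∀ a : α, rk a ≤ n := by
  intro a
  induction a using WellFoundedGT.induction with
  | _ a IH =>
    by_cases h : ∀ b, ¬ a < b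
    · exact (hg.2.2 a h).le
    · push_neg at h
      obtain ⟨b, hb⟩ := h
      obtain ⟨c, hac, hcb⟩ := exists_covBy_le_of_lt hb
      have := IH c hac.lt
      have := hg.1 _ _ hac
      omega

lemma exists_covby_top [Fintype α] (hg : IsGraded rk n) {a : α} (h : rk a ≠ n) :
    ∃ b, a ⋖ b := by
  by_contra hc
  push_neg at hc
  refine h (hg.2.2 a fun b hb => ?_)
  obtain ⟨c, hac, _⟩ := exists_covBy_le_of_lt hb
  exact hc c hac

lemma exists_covby_bot [Fintype α] (hg : IsGraded rk n) {a : α} (h : rk a ≠ 0) :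
    ∃ b, b ⋖ a := by
  by_contra hc
  push_neg at hc
  refine h (hg.2.1 a fun b hb => ?_)
  obtain ⟨c, _, hca⟩ := exists_le_covBy_of_lt hb
  exact hc c hca

end Basics

section Mid
attribute [local instance] Classical.propDecidable

variable {α : Type*} [PartialOrder α] [Fintype α] (rk : α → ℕ) (n : ℕ)

abbrev Mid := {a : α // rk a ≠ 0 ∧ rk a ≠ n}

def midrk (m : Mid rk n) : ℕ := rk m.val - 1

variable {rk n}

lemma mid_rk_bounds [Fintype α] (hg : IsGraded rk n) (m : Mid rk n) :
    1 ≤ rk m.val ∧ rk m.val ≤ n - 1 ∧ 2 ≤ n := by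
  have h1 := m.2.1
  have h2 := m.2.2
  have h3 := rk_le hg m.val
  omega

lemma mid_covby_iff (hg : IsGraded rk n) {m m' : Mid rk n} :
    m ⋖ m' ↔ m.val ⋖ m'.val := by
  constructor
  · rintro ⟨hlt, hmid⟩
    refine ⟨hlt, fun c hmc hcm' => ?_⟩
    have hc1 : rk m.val < rk c := lt_rk hg _ hmc
    have hc2 : rk c < rk m'.val := lt_rk hg _ hcm'
    have hb := mid_rk_bounds hg m
    have hb' := mid_rk_bounds hg m'
    have hc0 : rk c ≠ 0 := by omega
    have hcn : rk c ≠ n := by omega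
    exact hmid (c := (⟨c, hc0, hcn⟩ : Mid rk n)) (Subtype.mk_lt_mk.mpr hmc) (Subtype.mk_lt_mk.mpr hcm')
  · rintro ⟨hlt, hmid⟩
    exact ⟨hlt, fun c hmc hcm' => hmid (c := c.val) hmc hcm'⟩

lemma mid_graded (hg : IsGraded rk n) : IsGraded (midrk rk n) (n - 2) := by
  refine ⟨?_, ?_, ?_⟩
  · intro a b hab
    have h := hg.1 _ _ ((mid_covby_iff hg).mp hab)
    have := mid_rk_bounds hg a
    simp only [midrk]
    omega
  · intro a ha
    have hb := mid_rk_bounds hg a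
    by_contra hne
    have h2 : rk a.val ≠ 0 := a.2.1
    have h2' : 2 ≤ rk a.val := by simp only [midrk] at hne; omega
    obtain ⟨c, hc⟩ := exists_covby_bot hg h2
    have hcr : rk a.val = rk c + 1 := hg.1 _ _ hc
    have hc0 : rk c ≠ 0 := by omega
    have hcn : rk c ≠ n := by omega
    exact ha ⟨c, hc0, hcn⟩ hc.lt
  · intro a ha
    have hb := mid_rk_bounds hg a
    by_contra hne
    have h2' : rk a.val ≤ n - 2 := by simp only [midrk] at hne; omega
    have h2 : rk a.val ≠ n := a.2.2
    obtain ⟨c, hc⟩ := exists_covby_top hg h2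
    have hcr : rk c = rk a.val + 1 := hg.1 _ _ hc
    have hc0 : rk c ≠ 0 := by omega
    have hcn : rk c ≠ n := by omega
    exact ha ⟨c, hc0, hcn⟩ hc.lt

lemma natCard_subtype {β : Type*} [Fintype β] (q : β → Prop) :
    Nat.card {x : β // q x} = (Finset.univ.filter q).card := by
  rw [Nat.card_eq_fintype_card, Fintype.card_subtype]

lemma rankNum_eq_card_filter (rk : α → ℕ) (k : ℕ) :
    rankNum rk k = (Finset.univ.filter fun a => rk a = k).card := by
  rw [rankNum, Nat.card_eq_fintype_card, Fintype.card_subtype]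

lemma rankNum_mid_eq (hg : IsGraded rk n) {j : ℕ} (hj : j + 1 ≤ n - 1) (hn2 : 2 ≤ n) :
    rankNum (midrk rk n) j = rankNum rk (j + 1) := by
  rw [rankNum, rankNum]
  apply Nat.card_congr
  exact {
    toFun := fun m => ⟨m.val.val, by
      have h0 := m.val.2.1
      have h2 := m.2
      simp only [midrk] at h2
      omega⟩
    invFun := fun a => ⟨⟨a.val, by have := a.2; omega, by have := a.2; omega⟩, by
      have := a.2; simp only [midrk]; omega⟩
    left_inv := fun m => Subtype.ext (Subtype.ext rfl)
    right_inv := fun a => Subtype.ext rfl }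

lemma rankNum_mid_zero {j : ℕ} (hg : IsGraded rk n) (hj : n - 2 < j) :
    rankNum (midrk rk n) j = 0 := by
  rw [rankNum]
  have : IsEmpty {m : Mid rk n // midrk rk n m = j} := by
    refine ⟨fun m => ?_⟩
    have hb := mid_rk_bounds hg m.val
    have h2 := m.2
    simp only [midrk] at h2
    omega
  exact Nat.card_of_isEmpty


lemma level_min [Fintype α] (hsym : ∀ j ≤ n, rankNum rk j = rankNum rk (n - j))
    (huni : ∃ j ≤ n, (∀ i, i + 1 ≤ j → rankNum rk i ≤ rankNum rk (i + 1)) ∧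
      (∀ i, j ≤ i → i < n → rankNum rk (i + 1) ≤ rankNum rk i)) :
    ∀ i ≤ n, rankNum rk 0 ≤ rankNum rk i := by
  obtain ⟨j, hjn, h1, h2⟩ := huni
  have hA : ∀ i, i ≤ j → rankNum rk 0 ≤ rankNum rk i := by
    intro i
    induction i with
    | zero => intro _; exact le_refl _
    | succ i IH => intro h; exact le_trans (IH (by omega)) (h1 i h)
  have hB : ∀ d i, n ≤ i + d → j ≤ i → i ≤ n → rankNum rk n ≤ rankNum rk i := by
    intro d
    induction d with
    | zero =>
      intro i h _ hin
      have : i = n := by omega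
      subst this
      exact le_refl _
    | succ d IH =>
      intro i h hji hin
      rcases eq_or_lt_of_le hin with rfl | hlt
      · exact le_refl _
      · have step := h2 i hji hlt
        have hrec := IH (i+1) (by omega) (by omega) (by omega)
        omega
  intro i hin
  rcases le_or_gt i j with h | h
  · exact hA i h
  · have h0 : rankNum rk 0 = rankNum rk n := by simpa using hsym 0 (by omega)
    rw [h0]
    exact hB n i (by omega) (by omega) hin

lemma hsym_mid (hg : IsGraded rk n)
    (hsym : ∀ j ≤ n, rankNum rk j = rankNum rk (n - j)) :
    ∀ j ≤ n - 2, rankNum (midrk rk n) j = rankNum (midrk rk n) (n - 2 - j) := by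
  intro j hj
  rcases lt_or_ge n 2 with hn | hn
  · have hj0 : j = 0 := by omega
    have h0 : n - 2 - j = 0 := by omega
    rw [h0, hj0]
  · rw [rankNum_mid_eq hg (by omega) hn, rankNum_mid_eq hg (by omega) hn]
    have := hsym (j+1) (by omega)
    rw [this]
    congr 1
    omega

lemma huni_mid (hg : IsGraded rk n)
    (huni : ∃ j ≤ n, (∀ i, i + 1 ≤ j → rankNum rk i ≤ rankNum rk (i + 1)) ∧
      (∀ i, j ≤ i → i < n → rankNum rk (i + 1) ≤ rankNum rk i)) :
    ∃ j ≤ n - 2, (∀ i, i + 1 ≤ j → rankNum (midrk rk n) i ≤ rankNum (midrk rk n) (i + 1)) ∧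
      (∀ i, j ≤ i → i < n - 2 → rankNum (midrk rk n) (i + 1) ≤ rankNum (midrk rk n) i) := by
  obtain ⟨j, hjn, h1, h2⟩ := huni
  refine ⟨min (max j 1) (n-1) - 1, by omega, ?_, ?_⟩
  · intro i hi
    have hj1 : 1 ≤ j := by omega
    have hin : i + 2 ≤ n - 1 := by omega
    have hij : i + 2 ≤ j := by omega
    have hn2 : 2 ≤ n := by omega
    rw [rankNum_mid_eq hg (by omega) hn2, rankNum_mid_eq hg (by omega) hn2]
    exact h1 (i+1) hij
  · intro i hi hin
    have hn3 : 3 ≤ n := by omega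
    have hn2 : 2 ≤ n := by omega
    rw [rankNum_mid_eq hg (by omega) hn2, rankNum_mid_eq hg (by omega) hn2]
    exact h2 (i+1) (by omega) (by omega)

lemma hnmp_mid (hg : IsGraded rk n)
    (hnmp : ∀ i : ℕ, ∀ L : Finset α, (∀ x ∈ L, rk x = i) →
      L.card * rankNum rk (i + 1) ≤
        Nat.card {p : α // rk p = i + 1 ∧ ∃ x ∈ L, x ⋖ p} * rankNum rk i) :
    ∀ i : ℕ, ∀ L : Finset (Mid rk n), (∀ x ∈ L, midrk rk n x = i) →
      L.card * rankNum (midrk rk n) (i + 1) ≤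
        Nat.card {p : Mid rk n // midrk rk n p = i + 1 ∧ ∃ x ∈ L, x ⋖ p} *
          rankNum (midrk rk n) i := by
  intro i L hL
  rcases lt_or_ge (n - 2) (i + 1) with hcase | hcase
  · rw [rankNum_mid_zero hg hcase]
    simp
  · -- i + 1 ≤ n - 2, so i + 2 ≤ n - 1 and n ≥ 3
    have hn2 : 2 ≤ n := by omega
    have hLrk : ∀ x ∈ L.image Subtype.val, rk x = i + 1 := by
      intro x hx
      obtain ⟨m, hm, rfl⟩ := Finset.mem_image.mp hx
      have := hL m hm
      have h0 := m.2.1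
      simp only [midrk] at this
      omega
    have key := hnmp (i+1) (L.image Subtype.val) hLrk
    have hcard : (L.image Subtype.val).card = L.card :=
      Finset.card_image_of_injective _ Subtype.val_injective
    have hshade : Nat.card {p : α // rk p = i + 1 + 1 ∧ ∃ x ∈ L.image Subtype.val, x ⋖ p} =
        Nat.card {p : Mid rk n // midrk rk n p = i + 1 ∧ ∃ x ∈ L, x ⋖ p} := by
      apply Nat.card_congr
      exact {
        toFun := fun p => ⟨⟨p.val, by have := p.2.1; omega, by have := p.2.1; omega⟩, by
          constructor
          · have := p.2.1; simp only [midrk]; omega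
          · obtain ⟨x, hx, hcov⟩ := p.2.2
            obtain ⟨m, hm, rfl⟩ := Finset.mem_image.mp hx
            exact ⟨m, hm, (mid_covby_iff hg).mpr hcov⟩⟩
        invFun := fun p => ⟨p.val.val, by
          have h2 := p.2.1
          have h0 := p.val.2.1
          constructor
          · simp only [midrk] at h2; omega
          · obtain ⟨m, hm, hcov⟩ := p.2.2
            exact ⟨m.val, Finset.mem_image_of_mem _ hm, (mid_covby_iff hg).mp hcov⟩⟩
        left_inv := fun p => Subtype.ext rfl
        right_inv := fun p => Subtype.ext (Subtype.ext rfl) }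
    rw [hcard, hshade] at key
    rw [show rankNum rk (i+1+1) = rankNum (midrk rk n) (i+1) from
        (rankNum_mid_eq hg (by omega) hn2).symm,
      show rankNum rk (i+1) = rankNum (midrk rk n) i from
        (rankNum_mid_eq hg (by omega) hn2).symm] at key
    exact key

end Mid

section Step
attribute [local instance] Classical.propDecidable
variable {α : Type*} [PartialOrder α] [Fintype α] (rk : α → ℕ) (n : ℕ)

abbrev BotT := {a : α // rk a = 0}
abbrev Lev1T := {a : α // rk a = 1}
abbrev TopT := {a : α // rk a = n}

variable (fM : Mid rk n → List (Mid rk n))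
variable (fHall : BotT rk ⊕ Lev1T rk → Lev1T rk ⊕ TopT rk n)

def tauM (m : Mid rk n) : Mid rk n := ((fM m).getLast?).getD m

def toMid (hn2 : 2 ≤ n) (u : Lev1T rk) : Mid rk n :=
  ⟨u.val, by have := u.2; omega, by have := u.2; omega⟩

noncomputable def xOf (u : Lev1T rk) : List α :=
  if h : ∃ x : BotT rk, fHall (Sum.inl x) = Sum.inl u then [h.choose.val] else []

def yOf (u : Lev1T rk) : List α :=
  match fHall (Sum.inr u) with
  | Sum.inl _ => []
  | Sum.inr y => [y.val]

noncomputable def Gfun : List (Mid rk n) → List α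
  | [] => []
  | h :: t =>
    if hh : rk h.val = 1 then
      (xOf rk n fHall ⟨h.val, hh⟩ ++ (h :: t).map Subtype.val) ++ yOf rk n fHall ⟨h.val, hh⟩
    else (h :: t).map Subtype.val


variable {rk n}

lemma mid_strictmono (hg : IsGraded rk n) :
    ∀ a b : Mid rk n, a < b → midrk rk n a < midrk rk n b := by
  intro a b hab
  have h := lt_rk hg (b := b.val) a.val (Subtype.coe_lt_coe.mpr hab)
  have := a.2.1
  simp only [midrk]
  omega

lemma head_lev1 (hg : IsGraded rk n) (hn2 : 2 ≤ n)
    (hmemM : ∀ m, m ∈ fM m) (hchM : ∀ m, (fM m).Chain' (· ⋖ ·)) (u : Lev1T rk) :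
    (fM (toMid rk n hn2 u)).head? = some (toMid rk n hn2 u) := by
  set m := toMid rk n hn2 u with hm
  have hmem := hmemM m
  have hne := List.ne_nil_of_mem hmem
  have hh : (fM m).head? = some ((fM m).head hne) := List.head?_eq_head hne
  have heq : m = (fM m).head hne := by
    refine chain_head_eq (ρ := midrk rk n) (mid_strictmono hg) (hchM m) hmem hh ?_
    have hu := u.2
    have : midrk rk n m = 0 := by simp only [midrk, hm, toMid]; omega
    omega
  rw [hh, ← heq]

lemma tau_getLast? (hmemM : ∀ m, m ∈ fM m) (m : Mid rk n) :
    (fM m).getLast? = some (tauM rk n fM m) := by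
  have hne := List.ne_nil_of_mem (hmemM m)
  rw [List.getLast?_eq_getLast_of_ne_nil hne]
  simp [tauM, List.getLast?_eq_getLast_of_ne_nil hne]

lemma tau_mem (hmemM : ∀ m, m ∈ fM m) (m : Mid rk n) : tauM rk n fM m ∈ fM m := by
  have h := tau_getLast? fM hmemM m
  obtain ⟨h', heq⟩ := List.mem_getLast?_eq_getLast (show _ ∈ (fM m).getLast? from by
    rw [h]; rfl)
  rw [heq]
  exact List.getLast_mem h'

lemma tau_rank (hg : IsGraded rk n) (hn2 : 2 ≤ n)
    (hmemM : ∀ m, m ∈ fM m) (hchM : ∀ m, (fM m).Chain' (· ⋖ ·))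
    (hsymM : ∀ m x y, (fM m).head? = some x → (fM m).getLast? = some y →
      midrk rk n x + midrk rk n y = n - 2) (u : Lev1T rk) :
    midrk rk n (tauM rk n fM (toMid rk n hn2 u)) = n - 2 := by
  have h1 := head_lev1 fM hg hn2 hmemM hchM u
  have h2 := tau_getLast? fM hmemM (toMid rk n hn2 u)
  have h3 := hsymM _ _ _ h1 h2
  have hu := u.2
  have h0 : midrk rk n (toMid rk n hn2 u) = 0 := by simp only [midrk, toMid]; omega
  omega

lemma G_dichotomy (hg : IsGraded rk n) (hn2 : 2 ≤ n)
    (hinj : Injective fHall) (hsurj : Surjective fHall)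
    (hr3 : ∀ u u', fHall (Sum.inr u) = Sum.inl u' → u' = u) (m : Mid rk n) :
    (Gfun rk n fHall (fM m) = (fM m).map Subtype.val) ∨
    (∃ (x : BotT rk) (u : Lev1T rk) (y : TopT rk n),
      (fM m).head? = some (toMid rk n hn2 u) ∧ fHall (Sum.inl x) = Sum.inl u ∧
      fHall (Sum.inr u) = Sum.inr y ∧
      Gfun rk n fHall (fM m) = (x.val :: (fM m).map Subtype.val) ++ [y.val]) := by
  rcases hlist : fM m with _ | ⟨h, t⟩
  · left
    simp [Gfun]
  · by_cases hh : rk h.val = 1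
    · set u : Lev1T rk := ⟨h.val, hh⟩ with hu
      have htm : toMid rk n hn2 u = h := Subtype.ext rfl
      rcases hf : fHall (Sum.inr u) with u' | y
      · obtain rfl : u' = u := hr3 _ _ hf
        left
        have hx : xOf rk n fHall u = [] := by
          rw [xOf, dif_neg]
          rintro ⟨x, hxx⟩
          exact absurd (hinj (hxx.trans hf.symm)) (by simp)
        have hy : yOf rk n fHall u = [] := by
          simp only [yOf, hf]
        simp only [Gfun, dif_pos hh, ← hu, hx, hy, List.nil_append, List.append_nil]
      · right
        have hex : ∃ x : BotT rk, fHall (Sum.inl x) = Sum.inl u := by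
          obtain ⟨s, hs⟩ := hsurj (Sum.inl u)
          rcases s with x | u''
          · exact ⟨x, hs⟩
          · obtain rfl : u = u'' := hr3 _ _ hs
            rw [hs] at hf
            cases hf
        refine ⟨hex.choose, u, y, ?_, hex.choose_spec, hf, ?_⟩
        · rw [htm]; rfl
        · have hxx : xOf rk n fHall u = [hex.choose.val] := by rw [xOf, dif_pos hex]
          have hyy : yOf rk n fHall u = [y.val] := by simp only [yOf, hf]
          simp only [Gfun, dif_pos hh, ← hu, hxx, hyy, List.singleton_append]
    · left
      simp only [Gfun, dif_neg hh]


noncomputable def fStep (hn2 : 2 ≤ n)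
    (hex0 : ∀ x : BotT rk, ∃ u, fHall (Sum.inl x) = Sum.inl u)
    (hexn : ∀ y : TopT rk n, ∃ u, fHall (Sum.inr u) = Sum.inr y) : α → List α := fun a =>
  if h0 : rk a = 0 then
    Gfun rk n fHall (fM (toMid rk n hn2 (hex0 ⟨a, h0⟩).choose))
  else if hn' : rk a = n then
    Gfun rk n fHall (fM (toMid rk n hn2 (hexn ⟨a, hn'⟩).choose))
  else Gfun rk n fHall (fM ⟨a, h0, hn'⟩)

lemma step_exists (hg : IsGraded rk n) (hn2 : 2 ≤ n)
    (hmemM : ∀ m, m ∈ fM m)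
    (heqM : ∀ m m', m ∈ fM m' → fM m = fM m')
    (hchM : ∀ m, (fM m).Chain' (· ⋖ ·))
    (hsymM : ∀ m x y, (fM m).head? = some x → (fM m).getLast? = some y →
      midrk rk n x + midrk rk n y = n - 2)
    (hinj : Injective fHall) (hsurj : Surjective fHall)
    (hr1 : ∀ x u, fHall (Sum.inl x) = Sum.inl u → x.val ⋖ u.val)
    (hr2 : ∀ x y, fHall (Sum.inl x) ≠ Sum.inr y)
    (hr3 : ∀ u u', fHall (Sum.inr u) = Sum.inl u' → u' = u)
    (hr4 : ∀ u y, fHall (Sum.inr u) = Sum.inr y →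
      (tauM rk n fM (toMid rk n hn2 u)).val ⋖ y.val) :
    ∃ f : α → List α, (∀ a, a ∈ f a) ∧ (∀ a b, a ∈ f b → f a = f b) ∧
      (∀ a, (f a).Chain' (· ⋖ ·)) ∧
      (∀ a x y, (f a).head? = some x → (f a).getLast? = some y → rk x + rk y = n) := by
  have hex0 : ∀ x : BotT rk, ∃ u, fHall (Sum.inl x) = Sum.inl u := by
    intro x
    rcases hf : fHall (Sum.inl x) with u | y
    · exact ⟨u, rfl⟩
    · exact absurd hf (hr2 x y)
  have hexn : ∀ y : TopT rk n, ∃ u, fHall (Sum.inr u) = Sum.inr y := by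
    intro y
    obtain ⟨s, hs⟩ := hsurj (Sum.inr y)
    rcases s with x | u
    · exact absurd hs (hr2 _ _)
    · exact ⟨u, hs⟩
  set F := fStep fM fHall hn2 hex0 hexn with hF
  -- the mid part of any G-list is contained in it
  have hmv : ∀ (m : Mid rk n) (b : α), b ∈ (fM m).map Subtype.val →
      b ∈ Gfun rk n fHall (fM m) := by
    intro m b hb
    rcases G_dichotomy fM fHall hg hn2 hinj hsurj hr3 m with hA | ⟨x, u, y, _, _, _, hform'⟩
    · rwa [hA]
    · rw [hform']
      simp only [List.mem_append, List.mem_cons]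
      tauto
  -- every value of F is a G-list
  have hform : ∀ a, ∃ m, F a = Gfun rk n fHall (fM m) := by
    intro a
    rw [hF]
    unfold fStep
    split_ifs with h0 hn' <;> exact ⟨_, rfl⟩
  -- tau of toMid u equals tau of m when toMid u is the head of fM m
  have htau_eq : ∀ (u : Lev1T rk) (m : Mid rk n),
      (fM m).head? = some (toMid rk n hn2 u) →
      fM (toMid rk n hn2 u) = fM m ∧ tauM rk n fM (toMid rk n hn2 u) = tauM rk n fM m := by
    intro u m hhd
    have hmem : toMid rk n hn2 u ∈ fM m := List.mem_of_mem_head? (by rw [hhd]; rfl)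
    have hfm : fM (toMid rk n hn2 u) = fM m := heqM _ _ hmem
    refine ⟨hfm, ?_⟩
    have t1 := tau_getLast? fM hmemM (toMid rk n hn2 u)
    have t2 := tau_getLast? fM hmemM m
    rw [hfm] at t1
    rw [t1] at t2
    exact Option.some_injective _ t2
  -- key: if a belongs to the G-list of m then F a equals that G-list
  have key1 : ∀ (m : Mid rk n) (a : α), a ∈ Gfun rk n fHall (fM m) →
      F a = Gfun rk n fHall (fM m) := by
    intro m a ha
    have hmidcase : ∀ b : α, b ∈ (fM m).map Subtype.val → F b = Gfun rk n fHall (fM m) := by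
      intro b hb
      obtain ⟨mb, hmb, rfl⟩ := List.mem_map.mp hb
      have h0 : ¬ rk mb.val = 0 := mb.2.1
      have hn' : ¬ rk mb.val = n := mb.2.2
      rw [hF]
      unfold fStep
      rw [dif_neg h0, dif_neg hn']
      have : (⟨mb.val, h0, hn'⟩ : Mid rk n) = mb := Subtype.ext rfl
      rw [this, heqM mb m hmb]
    rcases G_dichotomy fM fHall hg hn2 hinj hsurj hr3 m with hA | ⟨x, u, y, hhd, hfx, hfy, hform'⟩
    · rw [hA] at ha
      exact hmidcase a ha
    · rw [hform'] at ha
      simp only [List.mem_append, List.mem_cons, List.mem_singleton] at ha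
      rcases ha with (rfl | ha) | (rfl | hfalse)
      rotate_right
      · cases hfalse
      · -- a = x.val
        have h0 := x.2
        rw [hF]
        unfold fStep
        rw [dif_pos h0]
        show Gfun rk n fHall (fM (toMid rk n hn2 (hex0 x).choose)) = _
        have hsp := (hex0 x).choose_spec
        have hcu : (hex0 x).choose = u := Sum.inl_injective (hsp.symm.trans hfx)
        rw [hcu, (htau_eq u m hhd).1]
      · exact hmidcase a ha
      · -- a = y.val
        have hnv := y.2
        have h0 : ¬ rk y.val = 0 := by omega
        rw [hF]
        unfold fStep
        rw [dif_neg h0, dif_pos hnv]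
        show Gfun rk n fHall (fM (toMid rk n hn2 (hexn y).choose)) = _
        have hsp := (hexn y).choose_spec
        have hcu : (hexn y).choose = u := Sum.inr_injective (hinj (hsp.trans hfy.symm))
        rw [hcu, (htau_eq u m hhd).1]
  -- membership
  have hmem : ∀ a, a ∈ F a := by
    intro a
    by_cases h0 : rk a = 0
    · rw [hF]
      unfold fStep
      rw [dif_pos h0]
      set x0 : BotT rk := ⟨a, h0⟩ with hx0
      set u := (hex0 x0).choose with huu
      have hsp : fHall (Sum.inl x0) = Sum.inl u := (hex0 x0).choose_spec
      have hhd := head_lev1 fM hg hn2 hmemM hchM u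
      rcases hlist : fM (toMid rk n hn2 u) with _ | ⟨h, t⟩
      · rw [hlist] at hhd; cases hhd
      · rw [hlist] at hhd
        have hhu : h = toMid rk n hn2 u := by
          rw [List.head?_cons] at hhd
          exact Option.some_injective _ hhd
        have hh1 : rk h.val = 1 := by rw [hhu]; exact u.2
        have huh : (⟨h.val, hh1⟩ : Lev1T rk) = u := by
            apply Subtype.ext
            show h.val = u.val
            rw [hhu]
            rfl
        have hsp' : fHall (Sum.inl x0) = Sum.inl (⟨h.val, hh1⟩ : Lev1T rk) := by
          rw [huh]; exact hsp
        have hexx : ∃ x : BotT rk, fHall (Sum.inl x) = Sum.inl (⟨h.val, hh1⟩ : Lev1T rk) :=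
          ⟨x0, hsp'⟩
        have hchoose : hexx.choose = x0 :=
          Sum.inl_injective (hinj (hexx.choose_spec.trans hsp'.symm))
        simp only [Gfun]
        rw [dif_pos hh1, xOf, dif_pos hexx, hchoose]
        simp [hx0]
    · by_cases hn' : rk a = n
      · rw [hF]
        unfold fStep
        rw [dif_neg h0, dif_pos hn']
        set y0 : TopT rk n := ⟨a, hn'⟩ with hy0
        set u := (hexn y0).choose with huu
        have hsp : fHall (Sum.inr u) = Sum.inr y0 := (hexn y0).choose_spec
        have hhd := head_lev1 fM hg hn2 hmemM hchM u
        rcases hlist : fM (toMid rk n hn2 u) with _ | ⟨h, t⟩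
        · rw [hlist] at hhd; cases hhd
        · rw [hlist] at hhd
          have hhu : h = toMid rk n hn2 u := by
            rw [List.head?_cons] at hhd
            exact Option.some_injective _ hhd
          have hh1 : rk h.val = 1 := by rw [hhu]; exact u.2
          have huh : (⟨h.val, hh1⟩ : Lev1T rk) = u := by
            apply Subtype.ext
            show h.val = u.val
            rw [hhu]
            rfl
          have hsp' : fHall (Sum.inr (⟨h.val, hh1⟩ : Lev1T rk)) = Sum.inr y0 := by
            rw [huh]; exact hsp
          have hyy : yOf rk n fHall (⟨h.val, hh1⟩ : Lev1T rk) = [a] := by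
            simp only [yOf, hsp', hy0]
          simp only [Gfun]
          rw [dif_pos hh1, hyy]
          simp
      · have : a ∈ (fM ⟨a, h0, hn'⟩).map Subtype.val :=
          List.mem_map.mpr ⟨⟨a, h0, hn'⟩, hmemM _, rfl⟩
        have h2 := hmv ⟨a, h0, hn'⟩ a this
        rw [hF]
        unfold fStep
        rw [dif_neg h0, dif_neg hn']
        exact h2
  -- chain property of G-lists
  have hGchain : ∀ m : Mid rk n, (Gfun rk n fHall (fM m)).Chain' (· ⋖ ·) := by
    intro m
    have hmid : ((fM m).map Subtype.val).Chain' (· ⋖ ·) := by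
      unfold List.Chain'
      rw [List.isChain_map]
      exact (hchM m).imp fun a b hab => (mid_covby_iff hg).mp hab
    rcases G_dichotomy fM fHall hg hn2 hinj hsurj hr3 m with hA | ⟨x, u, y, hhd, hfx, hfy, hform'⟩
    · rwa [hA]
    · rw [hform']
      have hne : (fM m).map Subtype.val ≠ [] := by
        intro hc
        rw [List.map_eq_nil_iff] at hc
        rw [hc] at hhd
        cases hhd
      unfold List.Chain'
      rw [List.isChain_append]
      refine ⟨?_, List.isChain_singleton _, ?_⟩
      · rw [List.isChain_cons]
        refine ⟨?_, hmid⟩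
        intro z hz
        have : ((fM m).map Subtype.val).head? = some (toMid rk n hn2 u).val := by
          rw [List.head?_map, hhd]
          rfl
        rw [this] at hz
        have hz' : z = (toMid rk n hn2 u).val := by
          simpa using hz.symm
        rw [hz']
        exact hr1 _ _ hfx
      · intro g hg' z hz
        have hz' : z = y.val := by simpa using hz.symm
        have hgl : (x.val :: (fM m).map Subtype.val).getLast? =
            some (tauM rk n fM m).val := by
          have e1 : (x.val :: (fM m).map Subtype.val) = [x.val] ++ (fM m).map Subtype.val := rfl
          rw [e1, List.getLast?_append_of_ne_nil _ hne, List.getLast?_map,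
            tau_getLast? fM hmemM m]
          rfl
        rw [hgl] at hg'
        have hg'' : g = (tauM rk n fM m).val := by simpa using hg'.symm
        rw [hg'', hz']
        have h4 := hr4 u y hfy
        rwa [(htau_eq u m hhd).2] at h4
  -- symmetry property of G-lists
  have hGsym : ∀ (m : Mid rk n) (x y : α), (Gfun rk n fHall (fM m)).head? = some x →
      (Gfun rk n fHall (fM m)).getLast? = some y → rk x + rk y = n := by
    intro m x y hx hy
    rcases G_dichotomy fM fHall hg hn2 hinj hsurj hr3 m with hA | ⟨x', u, y', hhd, hfx, hfy, hform'⟩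
    · rw [hA] at hx hy
      rcases hlist : fM m with _ | ⟨h, t⟩
      · rw [hlist] at hx; cases hx
      · have hne : fM m ≠ [] := by rw [hlist]; simp
        have hh : (fM m).head? = some ((fM m).head hne) := List.head?_eq_head hne
        rw [List.head?_map, hh] at hx
        have hxv : x = ((fM m).head hne).val := by simpa using hx.symm
        rw [List.getLast?_map, tau_getLast? fM hmemM m] at hy
        have hyv : y = (tauM rk n fM m).val := by simpa using hy.symm
        have hs := hsymM m ((fM m).head hne) (tauM rk n fM m) hh (tau_getLast? fM hmemM m)
        have hb1 := ((fM m).head hne).2.1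
        have hb2 := (tauM rk n fM m).2.1
        have hc1 := rk_le hg ((fM m).head hne).val
        have hc2 := rk_le hg (tauM rk n fM m).val
        simp only [midrk] at hs
        rw [hxv, hyv]
        omega
    · rw [hform'] at hx hy
      rw [List.getLast?_concat] at hy
      rw [List.cons_append, List.head?_cons] at hx
      have hxv : x = x'.val := by simpa using hx.symm
      have hyv : y = y'.val := by simpa using hy.symm
      have h1 := x'.2
      have h2 := y'.2
      rw [hxv, hyv]
      omega
  refine ⟨F, hmem, ?_, ?_, ?_⟩
  · intro a b hb
    obtain ⟨m, hm⟩ := hform b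
    rw [hm] at hb ⊢
    exact key1 m a hb
  · intro a
    obtain ⟨m, hm⟩ := hform a
    rw [hm]
    exact hGchain m
  · intro a x y hx hy
    obtain ⟨m, hm⟩ := hform a
    rw [hm] at hx hy
    exact hGsym m x y hx hy


lemma hall_exists (hg : IsGraded rk n) (hn2 : 2 ≤ n) [Nonempty α]
    (hsym : ∀ j ≤ n, rankNum rk j = rankNum rk (n - j))
    (huni : ∃ j ≤ n, (∀ i, i + 1 ≤ j → rankNum rk i ≤ rankNum rk (i + 1)) ∧
      (∀ i, j ≤ i → i < n → rankNum rk (i + 1) ≤ rankNum rk i))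
    (hnmp : ∀ i : ℕ, ∀ L : Finset α, (∀ x ∈ L, rk x = i) →
      L.card * rankNum rk (i + 1) ≤
        Nat.card {p : α // rk p = i + 1 ∧ ∃ x ∈ L, x ⋖ p} * rankNum rk i)
    (hmemM : ∀ m, m ∈ fM m)
    (heqM : ∀ m m', m ∈ fM m' → fM m = fM m')
    (hchM : ∀ m, (fM m).Chain' (· ⋖ ·))
    (hsymM : ∀ m x y, (fM m).head? = some x → (fM m).getLast? = some y →
      midrk rk n x + midrk rk n y = n - 2) :
    ∃ fHall : BotT rk ⊕ Lev1T rk → Lev1T rk ⊕ TopT rk n,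
      Injective fHall ∧ Surjective fHall ∧
      (∀ x u, fHall (Sum.inl x) = Sum.inl u → x.val ⋖ u.val) ∧
      (∀ x y, fHall (Sum.inl x) ≠ Sum.inr y) ∧
      (∀ u u', fHall (Sum.inr u) = Sum.inl u' → u' = u) ∧
      (∀ u y, fHall (Sum.inr u) = Sum.inr y →
        (tauM rk n fM (toMid rk n hn2 u)).val ⋖ y.val) := by
  classical
  set r0 := rankNum rk 0 with hr0
  set r1 := rankNum rk 1 with hr1'
  -- basic counting facts
  have hcard0 : Fintype.card (BotT rk) = r0 := by
    rw [hr0, rankNum, Nat.card_eq_fintype_card]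
  have hcard1 : Fintype.card (Lev1T rk) = r1 := by
    rw [hr1', rankNum, Nat.card_eq_fintype_card]
  have hcardn : Fintype.card (TopT rk n) = r0 := by
    have h := hsym 0 (by omega)
    simp only [Nat.sub_zero] at h
    rw [hr0, h, rankNum, Nat.card_eq_fintype_card]
  have hr01 : r0 ≤ r1 := level_min hsym huni 1 (by omega)
  have hr0pos : 1 ≤ r0 := by
    obtain ⟨mn, _, hmn⟩ := Finset.exists_minimal (s := (Finset.univ : Finset α)) ⟨Classical.arbitrary α, Finset.mem_univ _⟩
    have h0 : rk mn = 0 := hg.2.1 mn (fun b hb => not_le_of_gt hb (hmn (Finset.mem_univ b) hb.le))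
    have : Nonempty (BotT rk) := ⟨⟨mn, h0⟩⟩
    rw [hr0, rankNum]
    exact Nat.card_pos
  have hr1pos : 1 ≤ r1 := le_trans hr0pos hr01
  -- the target sets
  set t : (BotT rk ⊕ Lev1T rk) → Finset (Lev1T rk ⊕ TopT rk n) := Sum.elim
    (fun x => (Finset.univ.filter fun u : Lev1T rk => x.val ⋖ u.val).image Sum.inl)
    (fun u => insert (Sum.inl u)
        ((Finset.univ.filter fun y : TopT rk n =>
          (tauM rk n fM (toMid rk n hn2 u)).val ⋖ y.val).image Sum.inr))
    with ht
  -- injectivity of the tau-map on level 1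
  have htau_inj : Injective (fun u : Lev1T rk => (tauM rk n fM (toMid rk n hn2 u)).val) := by
    intro u u' huu
    have h1 : tauM rk n fM (toMid rk n hn2 u) = tauM rk n fM (toMid rk n hn2 u') :=
      Subtype.ext huu
    have h2 : fM (toMid rk n hn2 u) = fM (toMid rk n hn2 u') := by
      have e1 := heqM _ _ (tau_mem fM hmemM (toMid rk n hn2 u))
      have e2 := heqM _ _ (tau_mem fM hmemM (toMid rk n hn2 u'))
      rw [← e1, ← e2, h1]
    have e1 := head_lev1 fM hg hn2 hmemM hchM u
    have e2 := head_lev1 fM hg hn2 hmemM hchM u'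
    rw [h2] at e1
    rw [e1] at e2
    have h3 := Option.some_injective _ e2
    have hv := congrArg Subtype.val h3
    exact Subtype.ext (by exact hv)
  have htau_rk : ∀ u : Lev1T rk, rk (tauM rk n fM (toMid rk n hn2 u)).val = n - 1 := by
    intro u
    have h := tau_rank fM hg hn2 hmemM hchM hsymM u
    have h2 := (tauM rk n fM (toMid rk n hn2 u)).2.1
    simp only [midrk] at h
    omega
  -- Hall's condition
  have hall : ∀ s : Finset (BotT rk ⊕ Lev1T rk), s.card ≤ (s.biUnion t).card := by
    intro s
    set A := s.toLeft with hA
    set C := s.toRight with hC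
    set N1 : Finset (Lev1T rk) :=
      A.biUnion (fun x => Finset.univ.filter fun u : Lev1T rk => x.val ⋖ u.val) with hN1
    set N2 : Finset (TopT rk n) :=
      C.biUnion (fun u => Finset.univ.filter fun y : TopT rk n =>
        (tauM rk n fM (toMid rk n hn2 u)).val ⋖ y.val) with hN2
    have hsub : ((N1 ∪ C).image Sum.inl ∪ N2.image Sum.inr) ⊆ s.biUnion t := by
      intro z hz
      rcases Finset.mem_union.mp hz with hz | hz
      · obtain ⟨u, hu, rfl⟩ := Finset.mem_image.mp hz
        rcases Finset.mem_union.mp hu with hu | hu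
        · obtain ⟨x, hx, hux⟩ := Finset.mem_biUnion.mp hu
          refine Finset.mem_biUnion.mpr ⟨Sum.inl x, Finset.mem_toLeft.mp hx, ?_⟩
          simp only [ht, Sum.elim_inl, Sum.elim_inr]
          exact Finset.mem_image_of_mem _ hux
        · refine Finset.mem_biUnion.mpr ⟨Sum.inr u, Finset.mem_toRight.mp hu, ?_⟩
          simp only [ht, Sum.elim_inl, Sum.elim_inr]
          exact Finset.mem_insert_self _ _
      · obtain ⟨y, hy, rfl⟩ := Finset.mem_image.mp hz
        obtain ⟨u, hu, hyu⟩ := Finset.mem_biUnion.mp hy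
        refine Finset.mem_biUnion.mpr ⟨Sum.inr u, Finset.mem_toRight.mp hu, ?_⟩
        simp only [ht, Sum.elim_inl, Sum.elim_inr]
        exact Finset.mem_insert_of_mem (Finset.mem_image_of_mem _ hyu)
    have hcard_union : ((N1 ∪ C).image Sum.inl ∪ N2.image Sum.inr).card =
        (N1 ∪ C).card + N2.card := by
      rw [Finset.card_union_of_disjoint, Finset.card_image_of_injective _ Sum.inl_injective,
        Finset.card_image_of_injective _ Sum.inr_injective]
      simp [Finset.disjoint_left]
    have hscard : s.card ≤ A.card + C.card := by
      rw [hA, hC, Finset.card_toLeft_add_card_toRight]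
    -- counting inequality (i)
    have hi : A.card * r1 ≤ N1.card * r0 := by
      have hL : ∀ x ∈ A.image Subtype.val, rk x = 0 := by
        intro x hx
        obtain ⟨x', _, rfl⟩ := Finset.mem_image.mp hx
        exact x'.2
      have key := hnmp 0 (A.image Subtype.val) hL
      have hLc : (A.image Subtype.val).card = A.card :=
        Finset.card_image_of_injective _ Subtype.val_injective
      have hNc : Nat.card {p : α // rk p = 0 + 1 ∧ ∃ x ∈ A.image Subtype.val, x ⋖ p} =
          N1.card := by
        rw [natCard_subtype]
        rw [← Finset.card_image_of_injective N1 Subtype.val_injective]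
        congr 1
        ext p
        simp only [Finset.mem_filter, Finset.mem_univ, true_and, Finset.mem_image,
          Finset.mem_biUnion, hN1]
        constructor
        · rintro ⟨hp1, x, ⟨x', hx', rfl⟩, hcov⟩
          exact ⟨⟨p, hp1⟩, ⟨x', hx', by simp [hcov]⟩, rfl⟩
        · rintro ⟨u, ⟨x', hx', hcov⟩, rfl⟩
          exact ⟨u.2, x'.val, ⟨x', hx', rfl⟩, hcov⟩
      rw [hLc, hNc] at key
      exact key
    -- counting inequality (ii)
    have hii : C.card * r0 ≤ N2.card * r1 := by
      have hL : ∀ z ∈ C.image (fun u => (tauM rk n fM (toMid rk n hn2 u)).val), rk z = n - 1 := by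
        intro z hz
        obtain ⟨u, _, rfl⟩ := Finset.mem_image.mp hz
        exact htau_rk u
      have key := hnmp (n-1) (C.image (fun u => (tauM rk n fM (toMid rk n hn2 u)).val)) hL
      have hn1 : n - 1 + 1 = n := by omega
      rw [hn1] at key
      have hLc : (C.image (fun u => (tauM rk n fM (toMid rk n hn2 u)).val)).card = C.card :=
        Finset.card_image_of_injective _ htau_inj
      have hNc : Nat.card {p : α // rk p = n ∧
          ∃ x ∈ C.image (fun u => (tauM rk n fM (toMid rk n hn2 u)).val), x ⋖ p} =
          N2.card := by
        rw [natCard_subtype]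
        rw [← Finset.card_image_of_injective N2 Subtype.val_injective]
        congr 1
        ext p
        simp only [Finset.mem_filter, Finset.mem_univ, true_and, Finset.mem_image,
          Finset.mem_biUnion, hN2]
        constructor
        · rintro ⟨hp1, x, ⟨u, hu, rfl⟩, hcov⟩
          exact ⟨⟨p, hp1⟩, ⟨u, hu, by simp [hcov]⟩, rfl⟩
        · rintro ⟨y, ⟨u, hu, hcov⟩, rfl⟩
          exact ⟨y.2, _, ⟨u, hu, rfl⟩, hcov⟩
      rw [hLc, hNc] at key
      have hrn1 : rankNum rk (n - 1) = r1 := by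
        have h := hsym 1 (by omega)
        rw [hr1', h]
      have hrnn : rankNum rk n = r0 := by
        have h := hsym 0 (by omega)
        simp only [Nat.sub_zero] at h
        rw [hr0, h]
      rw [hrn1, hrnn] at key
      exact key
    have hN1U : N1.card ≤ (N1 ∪ C).card := Finset.card_le_card Finset.subset_union_left
    have hCU : C.card ≤ (N1 ∪ C).card := Finset.card_le_card Finset.subset_union_right
    -- combine
    refine le_trans hscard (le_trans ?_ (le_trans (le_of_eq hcard_union.symm)
      (Finset.card_le_card hsub)))
    obtain ⟨d, hd⟩ := Nat.exists_eq_add_of_le hr01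
    set U := (N1 ∪ C).card
    have c2 : r0 * N1.card ≤ r0 * U := Nat.mul_le_mul_left _ hN1U
    have c3 : d * C.card ≤ d * U := Nat.mul_le_mul_left _ hCU
    have goal_mul : (A.card + C.card) * r1 ≤ (U + N2.card) * r1 := by
      rw [hd] at hi hii ⊢
      nlinarith [hi, hii, c2, c3]
    exact Nat.le_of_mul_le_mul_right goal_mul hr1pos
  -- apply Hall's theorem
  obtain ⟨f, hfinj, hft⟩ :=
    (Finset.all_card_le_biUnion_card_iff_exists_injective t).mp hall
  have hfsurj : Surjective f := by
    have hbij : Bijective f := by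
      rw [Fintype.bijective_iff_injective_and_card]
      refine ⟨hfinj, ?_⟩
      rw [Fintype.card_sum, Fintype.card_sum, hcard0, hcard1, hcardn]
      omega
    exact hbij.2
  refine ⟨f, hfinj, hfsurj, ?_, ?_, ?_, ?_⟩
  · intro x u hfx
    have := hft (Sum.inl x)
    rw [hfx] at this
    simp only [ht, Sum.elim_inl, Sum.elim_inr] at this
    obtain ⟨u', hu', hequ⟩ := Finset.mem_image.mp this
    obtain rfl : u' = u := Sum.inl_injective hequ
    simpa using hu'
  · intro x y hfx
    have := hft (Sum.inl x)
    rw [hfx] at this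
    simp only [ht, Sum.elim_inl, Sum.elim_inr] at this
    obtain ⟨u', _, hequ⟩ := Finset.mem_image.mp this
    cases hequ
  · intro u u' hfu
    have := hft (Sum.inr u)
    rw [hfu] at this
    simp only [ht, Sum.elim_inl, Sum.elim_inr] at this
    rcases Finset.mem_insert.mp this with h | h
    · exact Sum.inl_injective h
    · obtain ⟨y, _, hy⟩ := Finset.mem_image.mp h
      cases hy
  · intro u y hfu
    have := hft (Sum.inr u)
    rw [hfu] at this
    simp only [ht, Sum.elim_inl, Sum.elim_inr] at this
    rcases Finset.mem_insert.mp this with h | h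
    · cases h
    · obtain ⟨y', hy', heq⟩ := Finset.mem_image.mp h
      obtain rfl : y' = y := Sum.inr_injective heq
      simpa using hy'

end Step

section NeqOne
attribute [local instance] Classical.propDecidable
variable {α : Type*} [PartialOrder α] [Fintype α] {rk : α → ℕ}

lemma case_n1 (hg : IsGraded rk 1) [Nonempty α]
    (hsym : ∀ j ≤ 1, rankNum rk j = rankNum rk (1 - j))
    (hnmp : ∀ i : ℕ, ∀ L : Finset α, (∀ x ∈ L, rk x = i) →
      L.card * rankNum rk (i + 1) ≤
        Nat.card {p : α // rk p = i + 1 ∧ ∃ x ∈ L, x ⋖ p} * rankNum rk i) :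
    ∃ f : α → List α, (∀ a, a ∈ f a) ∧ (∀ a b, a ∈ f b → f a = f b) ∧
      (∀ a, (f a).Chain' (· ⋖ ·)) ∧
      (∀ a x y, (f a).head? = some x → (f a).getLast? = some y → rk x + rk y = 1) := by
  classical
  have hrkle : ∀ a : α, rk a ≤ 1 := rk_le hg
  set r0 := rankNum rk 0 with hr0
  have hr01 : rankNum rk 1 = r0 := by
    have h := hsym 0 (by omega)
    simp only [Nat.sub_zero] at h
    rw [hr0, h]
  have hr0pos : 1 ≤ r0 := by
    obtain ⟨mn, _, hmn⟩ := Finset.exists_minimal (s := (Finset.univ : Finset α))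
      ⟨Classical.arbitrary α, Finset.mem_univ _⟩
    have h0 : rk mn = 0 := hg.2.1 mn (fun b hb => not_le_of_gt hb (hmn (Finset.mem_univ b) hb.le))
    have : Nonempty (BotT rk) := ⟨⟨mn, h0⟩⟩
    rw [hr0, rankNum]
    exact Nat.card_pos
  set t : BotT rk → Finset (TopT rk 1) :=
    fun x => Finset.univ.filter fun y : TopT rk 1 => x.val ⋖ y.val with ht
  have hall : ∀ s : Finset (BotT rk), s.card ≤ (s.biUnion t).card := by
    intro s
    have hL : ∀ x ∈ s.image Subtype.val, rk x = 0 := by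
      intro x hx
      obtain ⟨x', _, rfl⟩ := Finset.mem_image.mp hx
      exact x'.2
    have key := hnmp 0 (s.image Subtype.val) hL
    have hLc : (s.image Subtype.val).card = s.card :=
      Finset.card_image_of_injective _ Subtype.val_injective
    have hNc : Nat.card {p : α // rk p = 0 + 1 ∧ ∃ x ∈ s.image Subtype.val, x ⋖ p} =
        (s.biUnion t).card := by
      rw [natCard_subtype]
      rw [← Finset.card_image_of_injective (s.biUnion t) Subtype.val_injective]
      congr 1
      ext p
      simp only [Finset.mem_filter, Finset.mem_univ, true_and, Finset.mem_image,
        Finset.mem_biUnion, ht]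
      constructor
      · rintro ⟨hp1, x, ⟨x', hx', rfl⟩, hcov⟩
        exact ⟨⟨p, hp1⟩, ⟨x', hx', by simp [hcov]⟩, rfl⟩
      · rintro ⟨y, ⟨x', hx', hcov⟩, rfl⟩
        exact ⟨y.2, x'.val, ⟨x', hx', rfl⟩, hcov⟩
    rw [hLc, hNc, hr01] at key
    exact Nat.le_of_mul_le_mul_right key hr0pos
  obtain ⟨f0, hfinj, hft⟩ := (Finset.all_card_le_biUnion_card_iff_exists_injective t).mp hall
  have hfbij : Bijective f0 := by
    rw [Fintype.bijective_iff_injective_and_card]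
    refine ⟨hfinj, ?_⟩
    rw [show Fintype.card (BotT rk) = r0 by rw [hr0, rankNum, Nat.card_eq_fintype_card],
      show Fintype.card (TopT rk 1) = r0 by
        rw [← hr01, rankNum, Nat.card_eq_fintype_card]]
  have hcov : ∀ x : BotT rk, x.val ⋖ (f0 x).val := by
    intro x
    have := hft x
    simp only [ht, Finset.mem_filter] at this
    exact this.2
  have hrk1 : ∀ a : α, ¬ rk a = 0 → rk a = 1 := by
    intro a h
    have := hrkle a
    omega
  set F : α → List α := fun a =>
    if h0 : rk a = 0 then [a, (f0 ⟨a, h0⟩).val]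
    else [((hfbij.2 ⟨a, hrk1 a h0⟩).choose).val, a] with hF
  have hFval : ∀ (y : TopT rk 1), F y.val = [((hfbij.2 y).choose).val, y.val] := by
    intro y
    have h1 := y.2
    have h0 : ¬ rk y.val = 0 := by omega
    rw [hF]
    simp only [dif_neg h0]
  have hFbot : ∀ (x : BotT rk), F x.val = [x.val, (f0 x).val] := by
    intro x
    have h0 := x.2
    rw [hF]
    simp only [dif_pos h0]
  refine ⟨F, ?_, ?_, ?_, ?_⟩
  · intro a
    by_cases h0 : rk a = 0
    · rw [hF]; simp [dif_pos h0]
    · rw [hF]; simp [dif_neg h0]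
  · intro a b hb
    by_cases h0 : rk b = 0
    · have hFb := hFbot ⟨b, h0⟩
      rw [hFb] at hb
      simp only [List.mem_cons, List.mem_singleton, List.not_mem_nil, or_false] at hb
      rcases hb with rfl | rfl
      · rfl
      · -- a = (f0 ⟨b, h0⟩).val
        set y := f0 ⟨b, h0⟩ with hy
        have hchoose : (hfbij.2 y).choose = ⟨b, h0⟩ := hfinj (hfbij.2 y).choose_spec
        rw [hFval y, hchoose, hFb]
    · have h1 := hrk1 b h0
      have hFb := hFval ⟨b, h1⟩
      rw [hFb] at hb
      simp only [List.mem_cons, List.mem_singleton, List.not_mem_nil, or_false] at hb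
      rcases hb with rfl | rfl
      · set x := (hfbij.2 ⟨b, h1⟩).choose with hx
        have hspec : f0 x = ⟨b, h1⟩ := (hfbij.2 ⟨b, h1⟩).choose_spec
        rw [hFbot x, hspec, hFb]
      · rfl
  · intro a
    by_cases h0 : rk a = 0
    · rw [hFbot ⟨a, h0⟩]
      exact List.isChain_pair.mpr (hcov ⟨a, h0⟩)
    · have h1 := hrk1 a h0
      rw [hFval ⟨a, h1⟩]
      refine List.isChain_pair.mpr ?_
      have hspec : f0 (hfbij.2 ⟨a, h1⟩).choose = ⟨a, h1⟩ := (hfbij.2 ⟨a, h1⟩).choose_spec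
      have := hcov (hfbij.2 ⟨a, h1⟩).choose
      rwa [hspec] at this
  · intro a x y hx hy
    by_cases h0 : rk a = 0
    · rw [hFbot ⟨a, h0⟩] at hx hy
      simp only [List.head?_cons] at hx
      have hxa : x = a := by simpa using hx.symm
      have hya : y = (f0 ⟨a, h0⟩).val := by
        have : [a, (f0 ⟨a, h0⟩).val].getLast? = some (f0 ⟨a, h0⟩).val := rfl
        rw [this] at hy
        simpa using hy.symm
      rw [hxa, hya, h0]
      have := (f0 ⟨a, h0⟩).2
      omega
    · have h1 := hrk1 a h0
      rw [hFval ⟨a, h1⟩] at hx hy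
      have hxa : x = ((hfbij.2 ⟨a, h1⟩).choose).val := by
        simp only [List.head?_cons] at hx
        simpa using hx.symm
      have hya : y = a := by
        have : [((hfbij.2 ⟨a, h1⟩).choose).val, a].getLast? = some a := rfl
        rw [this] at hy
        simpa using hy.symm
      rw [hxa, hya, h1]
      have := ((hfbij.2 ⟨a, h1⟩).choose).2
      omega

end NeqOne

lemma main_ind : ∀ (n : ℕ) {α : Type*} [PartialOrder α] [Fintype α] (rk : α → ℕ),
    IsGraded rk n →
    (∀ j ≤ n, rankNum rk j = rankNum rk (n - j)) →
    (∃ j ≤ n, (∀ i, i + 1 ≤ j → rankNum rk i ≤ rankNum rk (i + 1)) ∧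
      (∀ i, j ≤ i → i < n → rankNum rk (i + 1) ≤ rankNum rk i)) →
    (∀ i : ℕ, ∀ L : Finset α, (∀ x ∈ L, rk x = i) →
      L.card * rankNum rk (i + 1) ≤
        Nat.card {p : α // rk p = i + 1 ∧ ∃ x ∈ L, x ⋖ p} * rankNum rk i) →
    ∃ f : α → List α, (∀ a, a ∈ f a) ∧ (∀ a b, a ∈ f b → f a = f b) ∧
      (∀ a, (f a).Chain' (· ⋖ ·)) ∧
      (∀ a x y, (f a).head? = some x → (f a).getLast? = some y → rk x + rk y = n) := by
  intro n
  induction n using Nat.strong_induction_on with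
  | _ n IH =>
  intro α _ _ rk hg hsymh hunih hnmph
  classical
  rcases isEmpty_or_nonempty α with hemp | hne
  · exact ⟨fun a => [a], fun a => (IsEmpty.false a).elim, fun a b hb => (IsEmpty.false a).elim,
      fun a => (IsEmpty.false a).elim, fun a x y _ _ => (IsEmpty.false a).elim⟩
  rcases n with _ | n0
  · -- n = 0
    refine ⟨fun a => [a], fun a => by simp, fun a b hb => by
      simp only [List.mem_singleton] at hb; rw [hb], fun a => List.isChain_singleton a, ?_⟩
    intro a x y hx hy
    have hxa : x = a := by simpa using hx.symm
    have hya : y = a := by simpa using hy.symm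
    have := rk_le hg a
    rw [hxa, hya]
    omega
  rcases n0 with _ | n'
  · -- n = 1
    exact case_n1 hg hsymh hnmph
  · -- n = n' + 2
    have hn2 : 2 ≤ n' + 2 := by omega
    have hred : n' + 2 - 2 = n' := by omega
    have hgM := mid_graded hg
    rw [hred] at hgM
    have hsymM := hsym_mid hg hsymh
    simp only [hred] at hsymM
    have huniM := huni_mid hg hunih
    simp only [hred] at huniM
    have hnmpM := hnmp_mid hg hnmph
    obtain ⟨fM, hmemM, heqM, hchM, hsymMM⟩ :=
      IH n' (by omega) (midrk rk (n'+2)) hgM hsymM huniM hnmpM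
    have hsymM2 : ∀ m x y, (fM m).head? = some x → (fM m).getLast? = some y →
        midrk rk (n'+2) x + midrk rk (n'+2) y = n' + 2 - 2 := by
      intro m x y h1 h2
      rw [hred]
      exact hsymMM m x y h1 h2
    obtain ⟨fHall, hinj, hsurj, hb1, hb2, hb3, hb4⟩ :=
      hall_exists fM hg hn2 hsymh hunih hnmph hmemM heqM hchM hsymM2
    exact step_exists fM fHall hg hn2 hmemM heqM hchM hsymM2 hinj hsurj hb1 hb2 hb3 hb4

/-- If `P` is a finite graded, rank-symmetric, rank-unimodal poset that has the normalized
matching property (`|∇L| / r_{i+1} ≥ |L| / r_i` for each rank level, stated here in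
cross-multiplied form), then `P` admits a symmetric chain decomposition. -/
theorem stmt_12 {α : Type*} [Fintype α] [PartialOrder α] (rk : α → ℕ) (n : ℕ)
    (hg : IsGraded rk n)
    (hsym : ∀ j ≤ n, rankNum rk j = rankNum rk (n - j))
    (huni : ∃ j ≤ n, (∀ i, i + 1 ≤ j → rankNum rk i ≤ rankNum rk (i + 1)) ∧
      (∀ i, j ≤ i → i < n → rankNum rk (i + 1) ≤ rankNum rk i))
    (hnmp : ∀ i : ℕ, ∀ L : Finset α, (∀ x ∈ L, rk x = i) →
      L.card * rankNum rk (i + 1) ≤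
        Nat.card {p : α // rk p = i + 1 ∧ ∃ x ∈ L, x ⋖ p} * rankNum rk i) :
    ∃ 𝒞 : Set (List α), IsSCD rk n 𝒞 := by
  obtain ⟨f, hmem, heq, hch, hsym'⟩ := main_ind n rk hg hsym huni hnmp
  refine ⟨Set.range f, ⟨?_, ?_⟩⟩
  · rintro c ⟨a, rfl⟩
    refine ⟨List.ne_nil_of_mem (hmem a), hch a, ?_⟩
    intro x hx y hy
    exact hsym' a x y (Option.mem_def.mp hx) (Option.mem_def.mp hy)
  · intro a
    refine ⟨f a, ⟨⟨a, rfl⟩, hmem a⟩, ?_⟩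
    rintro c ⟨⟨b, rfl⟩, hac⟩
    exact (heq a b hac).symm
end

section
/- Let w be an element of the complex reflection group G(d,d,n) (realized as monomial n×n matrices whose nonzero entries are d-th roots of unity with product 1) lying below some Coxeter element in absolute order. Then ℓ_T(w) = n − dim Fix(w), where Fix(w) = {v ∈ ℂⁿ : wv = v} and T is the set of reflections of G(d,d,n). -/
open Matrix

/-- Membership in `G(d,d,n)`, realized as monomial `n × n` complex matrices whose nonzero
entries are `d`-th roots of unity with product `1`. -/
def IsGDDN (d n : ℕ) (M : Matrix (Fin n) (Fin n) ℂ) : Prop :=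
  ∃ (σ : Equiv.Perm (Fin n)) (z : Fin n → ℂ),
    (∀ j, z j ^ d = 1) ∧ (∏ j, z j) = 1 ∧
    ∀ i j, M i j = if i = σ j then z j else 0

/-- The dimension of the fixed space `Fix(M) = {v ∈ ℂⁿ : Mv = v}`. -/
noncomputable def fixDim {n : ℕ} (M : Matrix (Fin n) (Fin n) ℂ) : ℕ :=
  Module.finrank ℂ (LinearMap.ker (Matrix.toLin' M - LinearMap.id))

/-- A reflection of `G(d,d,n)`: a nonidentity element whose fixed space is a hyperplane. -/
def IsReflGDDN (d n : ℕ) (t : Matrix (Fin n) (Fin n) ℂ) : Prop :=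
  IsGDDN d n t ∧ t ≠ 1 ∧ fixDim t = n - 1

/-- The absolute (reflection) length: the minimal number of reflections of `G(d,d,n)` whose
product is `w`. -/
noncomputable def refLen (d n : ℕ) (w : Matrix (Fin n) (Fin n) ℂ) : ℕ :=
  sInf {k | ∃ l : List (Matrix (Fin n) (Fin n) ℂ),
    (∀ x ∈ l, IsReflGDDN d n x) ∧ l.prod = w ∧ l.length = k}

/-- A Coxeter element of `G(d,d,n)`: an `e^{2πi/h}`-regular element, where
`h = (n-1)d` is the largest invariant degree; i.e. it has an eigenvector with eigenvalue
`e^{2πi/h}` lying on no reflecting hyperplane. -/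
def IsCoxeterElt (d n : ℕ) (γ : Matrix (Fin n) (Fin n) ℂ) : Prop :=
  IsGDDN d n γ ∧ ∃ v : Fin n → ℂ,
    γ.mulVec v = Complex.exp (2 * Real.pi * Complex.I / (((n : ℂ) - 1) * d)) • v ∧
    ∀ t, IsReflGDDN d n t → t.mulVec v ≠ v

noncomputable section
namespace GDDNAux

variable {d n : ℕ}

/-- The fixed subspace of a matrix. -/
def FixS (M : Matrix (Fin n) (Fin n) ℂ) : Submodule ℂ (Fin n → ℂ) :=
  LinearMap.ker (Matrix.toLin' M - LinearMap.id)

lemma fixDim_eq (M : Matrix (Fin n) (Fin n) ℂ) : fixDim M = Module.finrank ℂ (FixS M) := rfl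

lemma mem_FixS {M : Matrix (Fin n) (Fin n) ℂ} {x : Fin n → ℂ} :
    x ∈ FixS M ↔ M.mulVec x = x := by
  simp [FixS, LinearMap.mem_ker, LinearMap.sub_apply, Matrix.toLin'_apply, sub_eq_zero]

lemma fixDim_one : fixDim (1 : Matrix (Fin n) (Fin n) ℂ) = n := by
  have : FixS (1 : Matrix (Fin n) (Fin n) ℂ) = ⊤ := by
    ext x; simp [mem_FixS]
  rw [fixDim_eq, this, finrank_top, Module.finrank_pi]
  simp

lemma FixS_inf_le (A B : Matrix (Fin n) (Fin n) ℂ) : FixS A ⊓ FixS B ≤ FixS (A * B) := by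
  intro x hx
  rw [Submodule.mem_inf, mem_FixS, mem_FixS] at hx
  rw [mem_FixS, ← Matrix.mulVec_mulVec, hx.2, hx.1]

lemma fixDim_mul (A B : Matrix (Fin n) (Fin n) ℂ) :
    fixDim A + fixDim B ≤ n + fixDim (A * B) := by
  have h1 := Submodule.finrank_sup_add_finrank_inf_eq (FixS A) (FixS B)
  have h2 : Module.finrank ℂ (FixS A ⊓ FixS B : Submodule ℂ (Fin n → ℂ)) ≤
      Module.finrank ℂ (FixS (A * B)) :=
    Submodule.finrank_mono (FixS_inf_le A B)
  have h3 : Module.finrank ℂ (FixS A ⊔ FixS B : Submodule ℂ (Fin n → ℂ)) ≤ n := by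
    have := Submodule.finrank_le (FixS A ⊔ FixS B)
    rwa [Module.finrank_pi, Fintype.card_fin] at this
  simp only [fixDim_eq]
  omega


def mono (σ : Equiv.Perm (Fin n)) (z : Fin n → ℂ) : Matrix (Fin n) (Fin n) ℂ :=
  Matrix.of fun i j => if i = σ j then z j else 0

lemma mono_apply (σ : Equiv.Perm (Fin n)) (z : Fin n → ℂ) (i j : Fin n) :
    mono σ z i j = if i = σ j then z j else 0 := rfl

lemma mono_mul (σ τ : Equiv.Perm (Fin n)) (z u : Fin n → ℂ) :
    mono σ z * mono τ u = mono (σ * τ) (fun j => z (τ j) * u j) := by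
  ext i j
  simp only [Matrix.mul_apply, mono_apply]
  rw [Finset.sum_eq_single (τ j)]
  · simp [Equiv.Perm.mul_apply, mul_comm]
  · intro k _ hk
    rw [if_neg hk, mul_zero]
  · simp

lemma mono_congr (σ : Equiv.Perm (Fin n)) {z u : Fin n → ℂ} (h : ∀ k, z k = u k) :
    mono σ z = mono σ u := by
  have : z = u := funext h
  rw [this]

lemma mono_one : mono (1 : Equiv.Perm (Fin n)) (fun _ => 1) = 1 := by
  ext i j
  simp [mono_apply, Matrix.one_apply, eq_comm]
  congr 1

lemma mono_mulVec (σ : Equiv.Perm (Fin n)) (z : Fin n → ℂ) (v : Fin n → ℂ) (j : Fin n) :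
    (mono σ z).mulVec v (σ j) = z j * v j := by
  simp only [Matrix.mulVec, dotProduct, mono_apply]
  rw [Finset.sum_eq_single j]
  · simp
  · intro k _ hk
    have : ¬ (σ j = σ k) := fun h => hk (σ.injective h).symm
    simp [this]
  · simp

lemma mono_mulVec' (σ : Equiv.Perm (Fin n)) (z : Fin n → ℂ) (v : Fin n → ℂ) (i : Fin n) :
    (mono σ z).mulVec v i = z (σ⁻¹ i) * v (σ⁻¹ i) := by
  have := mono_mulVec σ z v (σ⁻¹ i)
  rwa [show σ (σ⁻¹ i) = i from σ.apply_symm_apply i] at this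


/-- weight function of a reflection -/
def zf (i j : Fin n) (ζ : ℂ) : Fin n → ℂ := fun k => if k = j then ζ else if k = i then ζ⁻¹ else 1

/-- A reflection: `e_j ↦ ζ e_i`, `e_i ↦ ζ⁻¹ e_j`. -/
def refl (i j : Fin n) (ζ : ℂ) : Matrix (Fin n) (Fin n) ℂ := mono (Equiv.swap i j) (zf i j ζ)

lemma zf_one (i j : Fin n) : zf i j (1:ℂ) = fun _ => 1 := by
  funext k; simp only [zf, inv_one]; split_ifs <;> rfl

lemma refl_mulVec (i j : Fin n) (hij : i ≠ j) (ζ : ℂ) (v : Fin n → ℂ) (k : Fin n) :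
    (refl i j ζ).mulVec v k = if k = i then ζ * v j else if k = j then ζ⁻¹ * v i else v k := by
  rw [refl, mono_mulVec', Equiv.swap_inv]
  split_ifs with h1 h2
  · rw [h1, Equiv.swap_apply_left]
    simp [zf]
  · rw [h2, Equiv.swap_apply_right]
    simp [zf, hij]
  · rw [Equiv.swap_apply_of_ne_of_ne h1 h2]
    simp [zf, h1, h2]

lemma refl_fix_iff {i j : Fin n} (hij : i ≠ j) {ζ : ℂ} (hζ : ζ ≠ 0) (v : Fin n → ℂ) :
    (refl i j ζ).mulVec v = v ↔ v i = ζ * v j := by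
  constructor
  · intro h
    have := congrFun h i
    rw [refl_mulVec i j hij, if_pos rfl] at this
    exact this.symm
  · intro h
    funext k
    rw [refl_mulVec i j hij]
    rcases eq_or_ne k i with rfl | hki
    · rw [if_pos rfl, ← h]
    · rw [if_neg hki]
      rcases eq_or_ne k j with rfl | hkj
      · rw [if_pos rfl, h, ← mul_assoc, inv_mul_cancel₀ hζ, one_mul]
      · rw [if_neg hkj]

lemma pow_eq_one_ne_zero {ζ : ℂ} {d : ℕ} (hd : 0 < d) (h : ζ ^ d = 1) : ζ ≠ 0 := by
  intro h0
  rw [h0, zero_pow (by omega)] at h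
  exact zero_ne_one h

lemma isRefl_refl (hd : 2 ≤ d) {i j : Fin n} (hij : i ≠ j) {ζ : ℂ} (hζd : ζ ^ d = 1) :
    IsReflGDDN d n (refl i j ζ) := by
  have hζ : ζ ≠ 0 := pow_eq_one_ne_zero (by omega) hζd
  refine ⟨⟨Equiv.swap i j, zf i j ζ, ?_, ?_, fun a b => rfl⟩, ?_, ?_⟩
  · intro k
    simp only [zf]
    split_ifs
    · exact hζd
    · rw [inv_pow, hζd, inv_one]
    · exact one_pow d
  · -- product of weights is 1
    have h1 : ∏ k, zf i j ζ k = zf i j ζ i * ∏ k ∈ Finset.univ.erase i, zf i j ζ k := by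
      rw [Finset.mul_prod_erase _ _ (Finset.mem_univ i)]
    have h2 : ∏ k ∈ Finset.univ.erase i, zf i j ζ k
        = zf i j ζ j * ∏ k ∈ (Finset.univ.erase i).erase j, zf i j ζ k := by
      rw [Finset.mul_prod_erase _ _ (by simp [hij.symm])]
    have h3 : ∏ k ∈ (Finset.univ.erase i).erase j, zf i j ζ k = 1 := by
      apply Finset.prod_eq_one
      intro k hk
      simp only [Finset.mem_erase] at hk
      simp [zf, hk.1, hk.2.1]
    have hzi : zf i j ζ i = ζ⁻¹ := by simp [zf, hij]
    have hzj : zf i j ζ j = ζ := by simp [zf]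
    rw [h1, h2, h3, mul_one, hzi, hzj, inv_mul_cancel₀ hζ]
  · -- refl ≠ 1
    intro h
    have := congrFun (congrFun h i) j
    rw [Matrix.one_apply_ne hij] at this
    rw [refl, mono_apply, Equiv.swap_apply_right, if_pos rfl] at this
    simp only [zf, if_pos rfl] at this
    exact hζ this
  · -- fixDim = n - 1
    classical
    set φ : (Fin n → ℂ) →ₗ[ℂ] ℂ :=
      (LinearMap.proj i : (Fin n → ℂ) →ₗ[ℂ] ℂ) - ζ • (LinearMap.proj j : (Fin n → ℂ) →ₗ[ℂ] ℂ)
      with hφ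
    have hker : FixS (refl i j ζ) = LinearMap.ker φ := by
      ext x
      rw [mem_FixS, refl_fix_iff hij hζ, LinearMap.mem_ker]
      simp only [hφ, LinearMap.sub_apply, LinearMap.smul_apply, LinearMap.proj_apply,
        smul_eq_mul]
      rw [sub_eq_zero]
    have hsurj : Function.Surjective φ := by
      intro c
      refine ⟨Pi.single i c, ?_⟩
      simp only [hφ, LinearMap.sub_apply, LinearMap.smul_apply, LinearMap.proj_apply,
        smul_eq_mul]
      rw [Pi.single_eq_same, Pi.single_eq_of_ne (Ne.symm hij)]
      ring
    have hrank := LinearMap.finrank_range_add_finrank_ker φ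
    rw [LinearMap.range_eq_top.mpr hsurj, finrank_top, Module.finrank_self] at hrank
    rw [Module.finrank_pi, Fintype.card_fin] at hrank
    have : fixDim (refl i j ζ) = Module.finrank ℂ (LinearMap.ker φ) := by
      rw [fixDim_eq, hker]
    omega

lemma isGDDN_mono {σ : Equiv.Perm (Fin n)} {z : Fin n → ℂ}
    (hzd : ∀ j, z j ^ d = 1) (hzp : (∏ j, z j) = 1) : IsGDDN d n (mono σ z) :=
  ⟨σ, z, hzd, hzp, fun _ _ => rfl⟩

lemma isGDDN_iff {M : Matrix (Fin n) (Fin n) ℂ} :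
    IsGDDN d n M ↔ ∃ (σ : Equiv.Perm (Fin n)) (z : Fin n → ℂ),
      (∀ j, z j ^ d = 1) ∧ (∏ j, z j) = 1 ∧ M = mono σ z := by
  constructor
  · rintro ⟨σ, z, h1, h2, h3⟩
    exact ⟨σ, z, h1, h2, by ext i j; rw [h3 i j]; rfl⟩
  · rintro ⟨σ, z, h1, h2, rfl⟩
    exact isGDDN_mono h1 h2

lemma gddn_mul {M N : Matrix (Fin n) (Fin n) ℂ} (hM : IsGDDN d n M) (hN : IsGDDN d n N) :
    IsGDDN d n (M * N) := by
  rw [isGDDN_iff] at *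
  obtain ⟨σ, z, hz1, hz2, rfl⟩ := hM
  obtain ⟨τ, u, hu1, hu2, rfl⟩ := hN
  refine ⟨σ * τ, fun j => z (τ j) * u j, ?_, ?_, (mono_mul σ τ z u)⟩
  · intro j
    rw [mul_pow, hz1, hu1, one_mul]
  · rw [Finset.prod_mul_distrib, Equiv.prod_comp τ z, hz2, hu2, one_mul]

lemma gddn_inv_aux {M : Matrix (Fin n) (Fin n) ℂ} (hd : 0 < d) (hM : IsGDDN d n M) :
    IsGDDN d n M⁻¹ ∧ M * M⁻¹ = 1 ∧ M⁻¹ * M = 1 := by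
  rw [isGDDN_iff] at hM
  obtain ⟨σ, z, hz1, hz2, rfl⟩ := hM
  have hz0 : ∀ j, z j ≠ 0 := fun j => pow_eq_one_ne_zero hd (hz1 j)
  set B := mono σ⁻¹ (fun j => (z (σ⁻¹ j))⁻¹) with hB
  have hMB : mono σ z * B = 1 := by
    rw [hB, mono_mul]
    have h1 : (fun j => z (σ⁻¹ j) * (z (σ⁻¹ j))⁻¹) = fun _ : Fin n => (1:ℂ) := by
      funext j
      rw [mul_inv_cancel₀ (hz0 _)]
    rw [h1, mul_inv_cancel, mono_one]
  have hBM : B * mono σ z = 1 := by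
    rw [hB, mono_mul]
    have h1 : (fun j => (z (σ⁻¹ (σ j)))⁻¹ * z j) = fun _ : Fin n => (1:ℂ) := by
      funext j
      rw [show σ⁻¹ (σ j) = j from σ.symm_apply_apply j, inv_mul_cancel₀ (hz0 _)]
    rw [h1, inv_mul_cancel, mono_one]
  have hinv : (mono σ z)⁻¹ = B := Matrix.inv_eq_right_inv hMB
  rw [hinv]
  refine ⟨?_, hMB, hBM⟩
  apply isGDDN_mono
  · intro j
    rw [inv_pow, hz1, inv_one]
  · have h2 : ∏ j, (z (σ⁻¹ j))⁻¹ = (∏ j, z (σ⁻¹ j))⁻¹ := by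
      rw [Finset.prod_inv_distrib]
    have h3 : ∏ j, z (σ⁻¹ j) = ∏ j, z j := Equiv.prod_comp σ⁻¹ z
    rw [h2, h3, hz2, inv_one]

/-- product of a list of reflections -/
def CanGen (d n : ℕ) (M : Matrix (Fin n) (Fin n) ℂ) : Prop :=
  ∃ l : List (Matrix (Fin n) (Fin n) ℂ), (∀ x ∈ l, IsReflGDDN d n x) ∧ l.prod = M

lemma canGen_one : CanGen d n 1 := ⟨[], by simp, List.prod_nil⟩

lemma canGen_mul {M N : Matrix (Fin n) (Fin n) ℂ} (hM : CanGen d n M) (hN : CanGen d n N) :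
    CanGen d n (M * N) := by
  obtain ⟨l1, h1, e1⟩ := hM
  obtain ⟨l2, h2, e2⟩ := hN
  refine ⟨l1 ++ l2, ?_, ?_⟩
  · intro x hx
    rcases List.mem_append.mp hx with h | h
    · exact h1 x h
    · exact h2 x h
  · rw [List.prod_append, e1, e2]

lemma canGen_perm (hd : 2 ≤ d) (σ : Equiv.Perm (Fin n)) :
    CanGen d n (mono σ (fun _ => 1)) := by
  refine Equiv.Perm.swap_induction_on σ ?_ ?_
  · rw [mono_one]; exact canGen_one
  · intro f x y hxy ih
    have hstep : mono (Equiv.swap x y * f) (fun _ => (1:ℂ)) =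
        refl x y 1 * mono f (fun _ => 1) := by
      rw [refl, zf_one, mono_mul]
      congr 1
      funext j
      rw [one_mul]
    rw [hstep]
    obtain ⟨l, hl, el⟩ := ih
    exact ⟨refl x y 1 :: l, by
      intro t ht
      rcases List.mem_cons.mp ht with rfl | ht
      · exact isRefl_refl hd hxy (one_pow d)
      · exact hl t ht, by rw [List.prod_cons, el]⟩


lemma canGen_diag (hd : 2 ≤ d) : ∀ (z : Fin n → ℂ), (∀ j, z j ^ d = 1) → (∏ j, z j) = 1 →
    CanGen d n (mono 1 z) := by
  classical
  suffices H : ∀ m (z : Fin n → ℂ), (∀ j, z j ^ d = 1) → (∏ j, z j) = 1 →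
      (Finset.univ.filter (fun j => z j ≠ 1)).card = m → CanGen d n (mono 1 z) by
    exact fun z h1 h2 => H _ z h1 h2 rfl
  intro m
  induction m using Nat.strong_induction_on with
  | _ m ih =>
    intro z h1 h2 hcard
    rcases Nat.lt_or_ge m 2 with hm | hm
    · interval_cases m
      · -- no nontrivial entries
        have hz : z = fun _ => 1 := by
          funext k
          by_contra hk
          have : k ∈ Finset.univ.filter (fun j => z j ≠ 1) := by simp [hk]
          rw [Finset.card_eq_zero] at hcard
          rw [hcard] at this
          exact absurd this (Finset.notMem_empty k)
        rw [hz, mono_one]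
        exact canGen_one
      · -- exactly one nontrivial entry: contradicts product = 1
        exfalso
        obtain ⟨i, hi⟩ := Finset.card_eq_one.mp hcard
        have hne : z i ≠ 1 := by
          have : i ∈ Finset.univ.filter (fun j => z j ≠ 1) := by rw [hi]; simp
          simpa using this
        have hrest : ∏ k ∈ Finset.univ.erase i, z k = 1 := by
          apply Finset.prod_eq_one
          intro k hk
          simp only [Finset.mem_erase] at hk
          by_contra hzk
          have : k ∈ Finset.univ.filter (fun j => z j ≠ 1) := by simp [hzk]
          rw [hi, Finset.mem_singleton] at this
          exact hk.1 this
        rw [← Finset.mul_prod_erase _ _ (Finset.mem_univ i), hrest, mul_one] at h2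
        exact hne h2
    · -- at least two nontrivial entries
      obtain ⟨i, hi, j, hj, hij⟩ := Finset.one_lt_card.mp
        (by omega : 1 < (Finset.univ.filter (fun j => z j ≠ 1)).card)
      have hz0 : ∀ k, z k ≠ 0 := fun k => pow_eq_one_ne_zero (by omega) (h1 k)
      set z' : Fin n → ℂ := fun k => if k = i then 1 else if k = j then z i * z j else z k with hz'
      have hz'1 : ∀ k, z' k ^ d = 1 := by
        intro k
        simp only [hz']
        split_ifs
        · exact one_pow d
        · rw [mul_pow, h1, h1, one_mul]
        · exact h1 k
      have hsame : ∀ k, k ≠ i → k ≠ j → z' k = z k := by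
        intro k h1' h2'
        simp [hz', h1', h2']
      have hz'2 : (∏ k, z' k) = 1 := by
        have e1 : ∏ k, z' k = z' i * (z' j * ∏ k ∈ (Finset.univ.erase i).erase j, z' k) := by
          rw [Finset.mul_prod_erase _ _ (by simp [hij.symm] : j ∈ Finset.univ.erase i),
            Finset.mul_prod_erase _ _ (Finset.mem_univ i)]
        have e2 : ∏ k, z k = z i * (z j * ∏ k ∈ (Finset.univ.erase i).erase j, z k) := by
          rw [Finset.mul_prod_erase _ _ (by simp [hij.symm] : j ∈ Finset.univ.erase i),
            Finset.mul_prod_erase _ _ (Finset.mem_univ i)]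
        have e3 : ∏ k ∈ (Finset.univ.erase i).erase j, z' k
            = ∏ k ∈ (Finset.univ.erase i).erase j, z k := by
          apply Finset.prod_congr rfl
          intro k hk
          simp only [Finset.mem_erase] at hk
          exact hsame k hk.2.1 hk.1
        have hz'i : z' i = 1 := by simp [hz']
        have hz'j : z' j = z i * z j := by simp [hz', hij.symm]
        rw [e1, hz'i, hz'j, e3, one_mul, mul_assoc, ← e2]
        exact h2
      have hlt : (Finset.univ.filter (fun k => z' k ≠ 1)).card < m := by
        have hsub : Finset.univ.filter (fun k => z' k ≠ 1)
            ⊆ (Finset.univ.filter (fun k => z k ≠ 1)).erase i := by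
          intro k hk
          simp only [Finset.mem_filter, Finset.mem_univ, true_and] at hk
          have hki : k ≠ i := by
            intro h
            apply hk
            rw [h]
            simp [hz']
          rw [Finset.mem_erase]
          refine ⟨hki, ?_⟩
          rcases eq_or_ne k j with rfl | hkj
          · exact hj
          · rw [hsame k hki hkj] at hk
            simp [hk]
        calc (Finset.univ.filter (fun k => z' k ≠ 1)).card
            ≤ ((Finset.univ.filter (fun k => z k ≠ 1)).erase i).card := Finset.card_le_card hsub
          _ < m := by
              rw [Finset.card_erase_of_mem hi, hcard]
              omega
      have hCG' : CanGen d n (mono 1 z') := ih _ hlt z' hz'1 hz'2 rfl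
      -- peel off two reflections
      have hzf_i : zf i j (z i)⁻¹ i = z i := by simp [zf, hij]
      have hzf_j : zf i j (z i)⁻¹ j = (z i)⁻¹ := by simp [zf]
      have hzf_k : ∀ k, k ≠ i → k ≠ j → zf i j (z i)⁻¹ k = 1 := by
        intro k ha hb; simp [zf, ha, hb]
      have hz'i : z' i = 1 := by simp [hz']
      have hz'j : z' j = z i * z j := by simp [hz', hij.symm]
      have hfact : mono 1 z = refl i j 1 * (refl i j (z i)⁻¹ * mono 1 z') := by
        rw [refl, refl, zf_one, mono_mul, mono_mul, mul_one, Equiv.swap_mul_self]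
        apply mono_congr
        intro k
        simp only [Equiv.Perm.one_apply, one_mul]
        rcases eq_or_ne k i with rfl | hki
        · rw [hzf_i, hz'i, mul_one]
        · rcases eq_or_ne k j with rfl | hkj
          · rw [hzf_j, hz'j, ← mul_assoc, inv_mul_cancel₀ (hz0 i), one_mul]
          · rw [hzf_k k hki hkj, one_mul, hsame k hki hkj]
      rw [hfact]
      have hij' : i ≠ j := hij
      have r1 : IsReflGDDN d n (refl i j 1) := isRefl_refl hd hij' (one_pow d)
      have r2 : IsReflGDDN d n (refl i j (z i)⁻¹) := by
        apply isRefl_refl hd hij'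
        rw [inv_pow, h1, inv_one]
      obtain ⟨l', hl', el'⟩ := hCG'
      exact ⟨refl i j 1 :: refl i j (z i)⁻¹ :: l', by
        intro t ht
        rcases List.mem_cons.mp ht with rfl | ht
        · exact r1
        rcases List.mem_cons.mp ht with rfl | ht
        · exact r2
        · exact hl' t ht, by rw [List.prod_cons, List.prod_cons, el']⟩

lemma canGen_of_gddn (hd : 2 ≤ d) {M : Matrix (Fin n) (Fin n) ℂ} (hM : IsGDDN d n M) :
    CanGen d n M := by
  rw [isGDDN_iff] at hM
  obtain ⟨σ, z, h1, h2, rfl⟩ := hM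
  have : mono σ z = mono σ (fun _ => 1) * mono 1 z := by
    rw [mono_mul, mul_one]
    have hz : (fun j => (1:ℂ) * z j) = z := by funext k; rw [one_mul]
    rw [hz]
  rw [this]
  exact canGen_mul (canGen_perm hd σ) (canGen_diag hd z h1 h2)


lemma fix_list_prod (l : List (Matrix (Fin n) (Fin n) ℂ)) (h : ∀ x ∈ l, IsReflGDDN d n x) :
    n ≤ fixDim l.prod + l.length := by
  induction l with
  | nil =>
    rw [List.prod_nil, List.length_nil, fixDim_one]
    omega
  | cons t l ihl =>
    have ht : IsReflGDDN d n t := h t List.mem_cons_self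
    have hrest : ∀ x ∈ l, IsReflGDDN d n x := fun x hx => h x (List.mem_cons_of_mem t hx)
    have ih := ihl hrest
    have hmul := fixDim_mul t l.prod
    have htd : fixDim t = n - 1 := ht.2.2
    have hn1 : 1 ≤ n := by
      by_contra hc
      have hn0 : n = 0 := by omega
      subst hn0
      apply ht.2.1
      ext i j
      exact absurd i.2 (by omega)
    rw [List.prod_cons, List.length_cons]
    omega

lemma refLen_le {M : Matrix (Fin n) (Fin n) ℂ} {k : ℕ}
    (h : ∃ l : List (Matrix (Fin n) (Fin n) ℂ),
      (∀ x ∈ l, IsReflGDDN d n x) ∧ l.prod = M ∧ l.length = k) :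
    refLen d n M ≤ k := Nat.sInf_le h

lemma refLen_lower {M : Matrix (Fin n) (Fin n) ℂ} (hM : CanGen d n M) :
    n ≤ refLen d n M + fixDim M := by
  obtain ⟨l, hl, el⟩ := hM
  have hne : {k | ∃ l : List (Matrix (Fin n) (Fin n) ℂ),
      (∀ x ∈ l, IsReflGDDN d n x) ∧ l.prod = M ∧ l.length = k}.Nonempty :=
    ⟨l.length, l, hl, el, rfl⟩
  have hmem := Nat.sInf_mem hne
  obtain ⟨l0, hl0, el0, hlen0⟩ := hmem
  have := fix_list_prod l0 hl0
  rw [el0, hlen0] at this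
  rw [refLen]
  omega

lemma mu_pow_eq_one_iff (hd : 2 ≤ d) (hn : 2 ≤ n) (k : ℕ) :
    (Complex.exp (2 * Real.pi * Complex.I / (((n : ℂ) - 1) * d))) ^ k = 1 ↔ (n-1)*d ∣ k := by
  set h : ℕ := (n-1)*d with hh
  have hh0 : h ≠ 0 := by
    have : 1 ≤ n - 1 := by omega
    have : 1 ≤ d := by omega
    simp only [hh]
    positivity
  have hcast : ((n : ℂ) - 1) * d = (h : ℂ) := by
    have h1 : ((n - 1 : ℕ) : ℂ) = (n : ℂ) - 1 := by
      push_cast [Nat.cast_sub (by omega : 1 ≤ n)]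
      ring
    rw [hh]
    push_cast
    rw [h1]
  have hC0 : (h : ℂ) ≠ 0 := by
    exact_mod_cast Nat.cast_ne_zero.mpr hh0
  have h2pi : (2 * Real.pi * Complex.I : ℂ) ≠ 0 := by
    simp [Real.pi_ne_zero, Complex.I_ne_zero]
  rw [hcast]
  rw [← Complex.exp_nat_mul]
  rw [Complex.exp_eq_one_iff]
  constructor
  · rintro ⟨m, hm⟩
    have hm' : (k : ℂ) = m * h := by
      have e1 : (k : ℂ) * (2 * Real.pi * Complex.I) = m * h * (2 * Real.pi * Complex.I) := by
        calc (k : ℂ) * (2 * Real.pi * Complex.I)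
            = (k * (2 * Real.pi * Complex.I / h)) * h := by field_simp
          _ = (m * (2 * Real.pi * Complex.I)) * h := by rw [hm]
          _ = m * h * (2 * Real.pi * Complex.I) := by ring
      exact mul_right_cancel₀ h2pi e1
    have : (k : ℤ) = m * h := by
      exact_mod_cast hm'
    refine Int.natCast_dvd_natCast.mp ⟨m, ?_⟩
    push_cast
    linarith
  · rintro ⟨t, rfl⟩
    refine ⟨t, ?_⟩
    push_cast
    field_simp

lemma range_map_prod_succ {M : Type*} [Monoid M] (g : ℕ → M) (m : ℕ) :
    ((List.range (m+1)).map g).prod = ((List.range m).map g).prod * g m := by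
  rw [List.range_succ, List.map_append, List.prod_append, List.map_cons, List.map_nil,
    List.prod_cons, List.prod_nil, mul_one]

open scoped Classical in
lemma chain {p : ℕ} (f : ℕ → Fin n) (z : Fin n → ℂ)
    (hinj : ∀ a b, a ≤ b → b < p → f a = f b → a = b) :
    ∀ m, m < p →
      (((List.range m).map (fun k => refl (f (k+1)) (f k) (z (f k)))).prod
        = mono (((List.range m).map (fun k => Equiv.swap (f (k+1)) (f k))).prod)
            (fun j => if j = f m then (∏ k ∈ Finset.range m, z (f k))⁻¹
              else if ∃ k, k < m ∧ j = f k then z j else 1))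
      ∧ (∀ k, k < m → (((List.range m).map (fun k => Equiv.swap (f (k+1)) (f k))).prod) (f k) = f (k+1))
      ∧ (((List.range m).map (fun k => Equiv.swap (f (k+1)) (f k))).prod) (f m) = f 0
      ∧ (∀ j, (∀ k, k ≤ m → j ≠ f k) →
          (((List.range m).map (fun k => Equiv.swap (f (k+1)) (f k))).prod) j = j) := by
  intro m
  induction m with
  | zero =>
    intro _
    refine ⟨?_, by intro k hk; exact absurd hk (by omega), by simp, by intro j _; simp⟩
    simp only [List.range_zero, List.map_nil, List.prod_nil]
    rw [← mono_one]
    apply mono_congr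
    intro k
    by_cases hk : k = f 0
    · rw [if_pos hk]
      simp
    · rw [if_neg hk, if_neg (by rintro ⟨k', hk', _⟩; omega)]
  | succ m ih =>
    intro hm1
    have hm : m < p := by omega
    obtain ⟨e1, e2, e3, e4⟩ := ih hm
    have hne : ∀ a b, a < b → b ≤ m+1 → f b ≠ f a := by
      intro a b hab hb hEq
      have := hinj a b (by omega) (by omega) hEq.symm
      omega
    have hne1 : f (m+1) ≠ f m := hne m (m+1) (by omega) (by omega)
    have hPstep : ((List.range (m+1)).map (fun k => Equiv.swap (f (k+1)) (f k))).prod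
        = ((List.range m).map (fun k => Equiv.swap (f (k+1)) (f k))).prod
          * Equiv.swap (f (m+1)) (f m) := range_map_prod_succ _ m
    refine ⟨?_, ?_, ?_, ?_⟩
    · -- matrix product identity
      rw [range_map_prod_succ, e1, refl, mono_mul, hPstep]
      apply mono_congr
      intro j
      by_cases h1 : j = f (m+1)
      · rw [h1, Equiv.swap_apply_left, if_pos rfl, if_pos rfl]
        have hzf : zf (f (m+1)) (f m) (z (f m)) (f (m+1)) = (z (f m))⁻¹ := by
          simp [zf, hne1]
        rw [hzf, Finset.prod_range_succ, mul_inv]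
      · by_cases h2 : j = f m
        · rw [h2, Equiv.swap_apply_right]
          have hEx1 : ¬∃ k, k < m ∧ f (m+1) = f k := by
            rintro ⟨k, hk, hEq⟩
            exact hne k (m+1) (by omega) (by omega) hEq
          have hzf2 : zf (f (m+1)) (f m) (z (f m)) (f m) = z (f m) := by
            simp [zf]
          rw [if_neg hne1, if_neg hEx1, hzf2, one_mul, if_neg (Ne.symm hne1),
            if_pos ⟨m, by omega, rfl⟩]
        · rw [Equiv.swap_apply_of_ne_of_ne h1 h2]
          have hzf3 : zf (f (m+1)) (f m) (z (f m)) j = 1 := by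
            simp [zf, h1, h2]
          rw [hzf3, mul_one, if_neg h2, if_neg h1]
          refine if_congr ⟨?_, ?_⟩ rfl rfl
          · rintro ⟨k, hk, hEq⟩
            exact ⟨k, by omega, hEq⟩
          · rintro ⟨k, hk, hEq⟩
            rcases Nat.lt_or_ge k m with hkm | hkm
            · exact ⟨k, hkm, hEq⟩
            · exfalso
              have : k = m := by omega
              rw [this] at hEq
              exact h2 hEq
    · intro k hk
      rw [hPstep, Equiv.Perm.mul_apply]
      rcases Nat.lt_or_ge k m with hkm | hkm
      · rw [Equiv.swap_apply_of_ne_of_ne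
          (Ne.symm (hne k (m+1) (by omega) (by omega)))
          (Ne.symm (hne k m (by omega) (by omega)))]
        exact e2 k hkm
      · have hkm' : k = m := by omega
        rw [hkm', Equiv.swap_apply_right]
        exact e4 (f (m+1)) (fun k' hk' => hne k' (m+1) (by omega) (by omega))
    · rw [hPstep, Equiv.Perm.mul_apply, Equiv.swap_apply_left]
      exact e3
    · intro j hj
      rw [hPstep, Equiv.Perm.mul_apply,
        Equiv.swap_apply_of_ne_of_ne (hj (m+1) (by omega)) (hj m (by omega))]
      exact e4 j (fun k hk => hj k (by omega))

open scoped Classical in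
lemma coxeter_structure (hd : 2 ≤ d) (hn : 2 ≤ n) {γ : Matrix (Fin n) (Fin n) ℂ}
    (hγ : IsCoxeterElt d n γ) :
    (∃ l : List (Matrix (Fin n) (Fin n) ℂ),
      (∀ x ∈ l, IsReflGDDN d n x) ∧ l.prod = γ ∧ l.length = n) ∧
    FixS γ = ⊥ := by
  obtain ⟨hG, v, heig, hreg⟩ := hγ
  rw [isGDDN_iff] at hG
  obtain ⟨σ, z, hz1, hz2, rfl⟩ := hG
  set μ := Complex.exp (2 * Real.pi * Complex.I / (((n : ℂ) - 1) * d)) with hμdef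
  have hμk : ∀ k : ℕ, μ ^ k = 1 ↔ (n-1)*d ∣ k := fun k => mu_pow_eq_one_iff hd hn k
  have hμ0 : μ ≠ 0 := Complex.exp_ne_zero _
  have hz0 : ∀ j, z j ≠ 0 := fun j => pow_eq_one_ne_zero (by omega) (hz1 j)
  have heig' : ∀ j, z j * v j = μ * v (σ j) := by
    intro j
    have h1 := congrFun heig (σ j)
    rw [mono_mulVec] at h1
    rw [h1]
    simp
  have hregv : ∀ (i j : Fin n), i ≠ j → ∀ ζ : ℂ, ζ ^ d = 1 → v i ≠ ζ * v j := by
    intro i j hij ζ hζ hbad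
    have hζ0 : ζ ≠ 0 := pow_eq_one_ne_zero (by omega) hζ
    exact hreg (refl i j ζ) (isRefl_refl hd hij hζ) ((refl_fix_iff hij hζ0 v).mpr hbad)
  have hex : ∃ j1, v j1 ≠ 0 := by
    by_contra hcon
    push_neg at hcon
    have h01 : (⟨0, by omega⟩ : Fin n) ≠ ⟨1, by omega⟩ := by
      simp [Fin.ext_iff]
    exact hregv _ _ h01 1 (one_pow d) (by rw [hcon, hcon, one_mul])
  obtain ⟨j1, hj1⟩ := hex
  set f : ℕ → Fin n := fun k => (σ ^ k) j1 with hfdef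
  have hf0 : f 0 = j1 := by simp [hfdef]
  have hfs : ∀ k, f (k+1) = σ (f k) := by
    intro k
    simp only [hfdef]
    rw [pow_succ']
    rfl
  have hvf : ∀ m, v (f m) ≠ 0 := by
    intro m
    induction m with
    | zero => rw [hf0]; exact hj1
    | succ m ih =>
      have h1 := heig' (f m)
      rw [← hfs m] at h1
      intro h0
      rw [h0, mul_zero] at h1
      exact mul_ne_zero (hz0 (f m)) ih h1
  have hcum : ∀ m, (∏ k ∈ Finset.range m, z (f k)) * v j1 = μ ^ m * v (f m) := by
    intro m
    induction m with
    | zero => simp [hf0]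
    | succ m ih =>
      rw [Finset.prod_range_succ, pow_succ]
      calc (∏ k ∈ Finset.range m, z (f k)) * z (f m) * v j1
          = z (f m) * ((∏ k ∈ Finset.range m, z (f k)) * v j1) := by ring
        _ = z (f m) * (μ ^ m * v (f m)) := by rw [ih]
        _ = μ ^ m * (z (f m) * v (f m)) := by ring
        _ = μ ^ m * (μ * v (σ (f m))) := by rw [heig' (f m)]
        _ = μ ^ m * μ * v (f (m+1)) := by rw [← hfs m]; ring
  have hPex : ∃ m, 0 < m ∧ f m = j1 := by
    refine ⟨orderOf σ, orderOf_pos σ, ?_⟩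
    simp [hfdef, pow_orderOf_eq_one]
  set p := Nat.find hPex with hpdef
  obtain ⟨hppos, hfp⟩ : 0 < p ∧ f p = j1 := Nat.find_spec hPex
  have hshift : ∀ a b, f (a + b) = (σ ^ a) (f b) := by
    intro a b
    simp [hfdef, pow_add, Equiv.Perm.mul_apply]
  have hinj : ∀ a b, a ≤ b → b < p → f a = f b → a = b := by
    intro a b hab hbp he
    by_contra hne
    have h1 : f b = (σ ^ a) (f (b - a)) := by
      rw [← hshift a (b-a)]
      congr 1
      omega
    have h2 : f a = (σ ^ a) (f 0) := by
      rw [← hshift a 0, Nat.add_zero]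
    rw [h1, h2] at he
    have h3 : f 0 = f (b - a) := (σ ^ a).injective he
    have h4 := Nat.find_min hPex (m := b - a) (by omega)
    rw [hf0] at h3
    exact h4 ⟨by omega, h3.symm⟩
  have hprodp : ∏ k ∈ Finset.range p, z (f k) = μ ^ p := by
    have h1 := hcum p
    rw [hfp] at h1
    exact mul_right_cancel₀ hj1 h1
  have hdvd : (n-1) ∣ p := by
    have h1 : (μ ^ p) ^ d = 1 := by
      rw [← hprodp, ← Finset.prod_pow]
      exact Finset.prod_eq_one (fun k _ => hz1 (f k))
    rw [← pow_mul] at h1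
    have h2 := (hμk (p * d)).mp h1
    exact (Nat.mul_dvd_mul_iff_right (by omega : 0 < d)).mp h2
  have hplen : p ≤ n := by
    have hinj' : Function.Injective (fun a : Fin p => f a) := by
      intro a b hEq
      apply Fin.ext
      rcases le_or_gt (a:ℕ) b with h | h
      · exact hinj a b h b.2 hEq
      · exact (hinj b a (by omega) a.2 hEq.symm).symm
    have := Fintype.card_le_of_injective _ hinj'
    simpa using this
  have hcase : p = n - 1 ∨ p = n := by
    obtain ⟨t, ht⟩ := hdvd
    rcases Nat.lt_or_ge t 2 with h | h
    · interval_cases t <;> omega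
    · have : (n-1) * 2 ≤ (n-1) * t := Nat.mul_le_mul_left _ h
      omega
  rcases hcase with hpn | hpn
  ·
    -- main case : p = n - 1
    set ζ := μ ^ (n-1) with hζdef
    have hζd : ζ ^ d = 1 := by
      rw [hζdef, ← pow_mul, hμk]
    have hζ0 : ζ ≠ 0 := pow_ne_zero _ hμ0
    have hζ1 : ζ ≠ 1 := by
      rw [hζdef]
      intro hEq
      have hdv := (hμk (n-1)).mp hEq
      have hle := Nat.le_of_dvd (by omega) hdv
      have h2 : (n-1)*2 ≤ (n-1)*d := Nat.mul_le_mul_left _ (by omega)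
      omega
    have hζinv : ζ⁻¹ ^ d = 1 := by rw [inv_pow, hζd, inv_one]
    have hcyc : ∏ k ∈ Finset.range (n-1), z (f k) = ζ := by
      rw [hζdef]
      exact hpn ▸ hprodp
    have hfn1 : f (n-1) = f 0 := by rw [← hpn, hfp, hf0]
    set O : Finset (Fin n) := (Finset.range (n-1)).image f with hO
    have hmemO : ∀ k, k < n-1 → f k ∈ O :=
      fun k hk => Finset.mem_image_of_mem f (Finset.mem_range.mpr hk)
    have hinjO : ∀ a ∈ Finset.range (n-1), ∀ b ∈ Finset.range (n-1), f a = f b → a = b := by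
      intro a ha b hb hEq
      rw [Finset.mem_range] at ha hb
      rcases le_or_gt (a:ℕ) b with h | h
      · exact hinj a b h (by omega) hEq
      · exact (hinj b a (by omega) (by omega) hEq.symm).symm
    have hOcard : O.card = n - 1 := by
      rw [hO, Finset.card_image_of_injOn (fun a ha b hb => hinjO a ha b hb), Finset.card_range]
    have hcardc : (Finset.univ \ O).card = 1 := by
      rw [Finset.card_sdiff_of_subset (Finset.subset_univ O), Finset.card_univ, Fintype.card_fin, hOcard]
      omega
    obtain ⟨j0, hj0⟩ := Finset.card_eq_one.mp hcardc
    have hj0mem : j0 ∉ O := by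
      have h1 : j0 ∈ Finset.univ \ O := by rw [hj0]; exact Finset.mem_singleton_self j0
      exact (Finset.mem_sdiff.mp h1).2
    have hcover : ∀ j : Fin n, j ∉ O → j = j0 := by
      intro j hj
      have h1 : j ∈ Finset.univ \ O := Finset.mem_sdiff.mpr ⟨Finset.mem_univ j, hj⟩
      rw [hj0] at h1
      exact Finset.mem_singleton.mp h1
    have haO : f (n-2) ∈ O := hmemO (n-2) (by omega)
    have haj0 : f (n-2) ≠ j0 := fun hEq => hj0mem (hEq ▸ haO)
    have hσj0 : σ j0 = j0 := by
      apply hcover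
      intro hmem
      rw [hO, Finset.mem_image] at hmem
      obtain ⟨k, hk, hEq⟩ := hmem
      rw [Finset.mem_range] at hk
      rcases Nat.eq_zero_or_pos k with rfl | hposk
      · have h1 : f ((n-2)+1) = σ (f (n-2)) := hfs (n-2)
        rw [show (n-2)+1 = n-1 by omega, hfn1] at h1
        have h2 : σ (f (n-2)) = σ j0 := by rw [← h1, hEq]
        have h3 := σ.injective h2
        exact hj0mem (h3 ▸ haO)
      · obtain ⟨k', rfl⟩ : ∃ k', k = k'+1 := ⟨k-1, by omega⟩
        have h1 : f (k'+1) = σ (f k') := hfs k'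
        rw [h1] at hEq
        have h3 := σ.injective hEq
        exact hj0mem (h3 ▸ hmemO k' (by omega))
    have hprodO : ∏ j ∈ O, z j = ζ := by
      rw [hO, Finset.prod_image hinjO]
      exact hcyc
    have huniv : (Finset.univ : Finset (Fin n)) = insert j0 O := by
      ext j
      simp only [Finset.mem_univ, true_iff, Finset.mem_insert]
      by_cases hj : j ∈ O
      · exact Or.inr hj
      · exact Or.inl (hcover j hj)
    have hzj0 : z j0 = ζ⁻¹ := by
      have h1 : (1:ℂ) = z j0 * ζ := by
        rw [← hz2, huniv, Finset.prod_insert hj0mem, hprodO]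
      calc z j0 = z j0 * ζ * ζ⁻¹ := by field_simp
        _ = 1 * ζ⁻¹ := by rw [← h1]
        _ = ζ⁻¹ := one_mul _
    -- the chain of reflections
    obtain ⟨hprodeq, hev1, hev2, hev3⟩ := chain f z hinj (n-2) (by omega)
    set Pm := ((List.range (n-2)).map (fun k => Equiv.swap (f (k+1)) (f k))).prod with hPmdef
    have hj0f : ∀ k, k ≤ n-2 → j0 ≠ f k := by
      intro k hk hEq
      exact hj0mem (hEq ▸ hmemO k (by omega))
    have hPmσ : Pm = σ := by
      apply Equiv.ext
      intro j
      by_cases hjO : j ∈ O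
      · rw [hO, Finset.mem_image] at hjO
        obtain ⟨k, hk, rfl⟩ := hjO
        rw [Finset.mem_range] at hk
        rcases Nat.lt_or_ge k (n-2) with hk2 | hk2
        · rw [hev1 k hk2, hfs]
        · have hkeq : k = n-2 := by omega
          rw [hkeq, hev2, ← hfn1, show n-1 = (n-2)+1 by omega, hfs]
      · have hjj0 : j = j0 := hcover j hjO
        rw [hjj0, hev3 j0 hj0f, hσj0]
    have hprodne : (∏ k ∈ Finset.range (n-2), z (f k)) ≠ 0 :=
      Finset.prod_ne_zero_iff.mpr (fun k _ => hz0 (f k))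
    have hζsplit : ζ = (∏ k ∈ Finset.range (n-2), z (f k)) * z (f (n-2)) := by
      rw [← hcyc, show n-1 = (n-2)+1 by omega, Finset.prod_range_succ]
    constructor
    · -- the length-n factorization
      refine ⟨((List.range (n-2)).map (fun k => refl (f (k+1)) (f k) (z (f k))))
        ++ [refl (f (n-2)) j0 1, refl (f (n-2)) j0 ζ⁻¹], ?_, ?_, ?_⟩
      · intro x hx
        rcases List.mem_append.mp hx with hx | hx
        · rw [List.mem_map] at hx
          obtain ⟨k, hk, rfl⟩ := hx
          rw [List.mem_range] at hk
          have hne : f (k+1) ≠ f k := by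
            intro hEq
            have := hinj k (k+1) (by omega) (by omega) hEq.symm
            omega
          exact isRefl_refl hd hne (hz1 (f k))
        · rcases List.mem_cons.mp hx with rfl | hx
          · exact isRefl_refl hd haj0 (one_pow d)
          rcases List.mem_cons.mp hx with rfl | hx
          · exact isRefl_refl hd haj0 hζinv
          · exact absurd hx List.not_mem_nil
      · -- the product equals γ
        rw [List.prod_append, List.prod_cons, List.prod_cons, List.prod_nil, mul_one,
          hprodeq, refl, refl, zf_one, mono_mul, mono_mul, Equiv.swap_mul_self, mul_one,
          hPmσ]
        apply mono_congr
        intro j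
        rw [Equiv.Perm.one_apply]
        simp only [Equiv.Perm.one_apply, one_mul]
        by_cases hjO : j ∈ O
        · rw [hO, Finset.mem_image] at hjO
          obtain ⟨k, hk, rfl⟩ := hjO
          rw [Finset.mem_range] at hk
          rcases Nat.lt_or_ge k (n-2) with hk2 | hk2
          · have hne1 : f k ≠ f (n-2) := by
              intro hEq
              have := hinj k (n-2) (by omega) (by omega) hEq
              omega
            have hne2 : f k ≠ j0 := fun hEq => (hj0f k (by omega)) hEq.symm
            rw [if_neg hne1, if_pos ⟨k, hk2, rfl⟩]
            have hzfv : zf (f (n-2)) j0 ζ⁻¹ (f k) = 1 := by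
              simp [zf, hne1, hne2]
            rw [hzfv, mul_one]
          · have hkeq : k = n-2 := by omega
            have hzfv : zf (f (n-2)) j0 ζ⁻¹ (f (n-2)) = ζ := by
              simp [zf, haj0, inv_inv]
            rw [hkeq, if_pos rfl, hzfv, hζsplit, inv_mul_cancel_left₀ hprodne]
        · have hjj0 : j = j0 := hcover j hjO
          have hne1 : j ≠ f (n-2) := by rw [hjj0]; exact hj0f (n-2) (le_refl _)
          have hnoex : ¬∃ k, k < n-2 ∧ j = f k := by
            rintro ⟨k, hk, hEq⟩
            rw [hjj0] at hEq
            exact hj0f k (by omega) hEq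
          have hzfv : zf (f (n-2)) j0 ζ⁻¹ j = ζ⁻¹ := by
            rw [hjj0]
            simp [zf]
          rw [if_neg hne1, if_neg hnoex, hzfv, one_mul, hjj0, hzj0]
      · -- the length is n
        rw [List.length_append, List.length_map, List.length_range]
        simp only [List.length_cons, List.length_nil]
        omega
    · -- FixS (mono σ z) = ⊥
      rw [Submodule.eq_bot_iff]
      intro u hu
      rw [mem_FixS] at hu
      have hcoord : ∀ j, z j * u j = u (σ j) := by
        intro j
        rw [← mono_mulVec σ z u j, hu]
      have hζinv1 : ζ⁻¹ ≠ 1 := by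
        intro h
        apply hζ1
        rw [← inv_inv ζ, h, inv_one]
      have hu0 : u j0 = 0 := by
        have h1 := hcoord j0
        rw [hσj0, hzj0] at h1
        by_contra h0
        exact hζinv1 (mul_right_cancel₀ h0 (by rw [h1, one_mul]))
      have hucum : ∀ m, (∏ k ∈ Finset.range m, z (f k)) * u (f 0) = u (f m) := by
        intro m
        induction m with
        | zero => simp
        | succ m ih =>
          rw [Finset.prod_range_succ]
          calc (∏ k ∈ Finset.range m, z (f k)) * z (f m) * u (f 0)
              = z (f m) * ((∏ k ∈ Finset.range m, z (f k)) * u (f 0)) := by ring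
            _ = z (f m) * u (f m) := by rw [ih]
            _ = u (σ (f m)) := hcoord (f m)
            _ = u (f (m+1)) := by rw [← hfs m]
      have huj1 : u (f 0) = 0 := by
        have h1 := hucum (n-1)
        rw [hcyc, hfn1] at h1
        by_contra h0
        exact hζ1 (mul_right_cancel₀ h0 (by rw [h1, one_mul]))
      funext j
      by_cases hjO : j ∈ O
      · rw [hO, Finset.mem_image] at hjO
        obtain ⟨k, hk, rfl⟩ := hjO
        rw [← hucum k, huj1, mul_zero]
        rfl
      · rw [hcover j hjO]
        rw [hu0]
        rfl
  · -- p = n, forces n = 2 and a contradiction with regularity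
    exfalso
    have hn2 : n = 2 := by
      have h1 : (n-1) ∣ n := hpn ▸ hdvd
      have h2 : (n-1) ∣ n - (n-1) := Nat.dvd_sub h1 (dvd_refl _)
      have h3 : n - (n-1) = 1 := by omega
      rw [h3] at h2
      have := Nat.le_of_dvd (by omega) h2
      omega
    have hab : f 0 ≠ f 1 := by
      intro hEq
      have := hinj 0 1 (by omega) (by omega) hEq
      omega
    have he1 : z (f 0) * v (f 0) = μ * v (f 1) := by
      rw [heig' (f 0), ← hfs 0]
    have hμd : μ ^ d = 1 := by
      rw [hμk, hn2]
      simp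
    set ξ := μ⁻¹ * z (f 0) with hξdef
    have hξd : ξ ^ d = 1 := by
      rw [hξdef, mul_pow, inv_pow, hμd, inv_one, one_mul, hz1]
    have hξ0 : ξ ≠ 0 := pow_eq_one_ne_zero (by omega) hξd
    have hfixv : v (f 1) = ξ * v (f 0) := by
      rw [hξdef]
      field_simp
      rw [mul_comm (v (f 1)) μ, ← he1]
    exact hreg (refl (f 1) (f 0) ξ) (isRefl_refl hd hab.symm hξd)
      ((refl_fix_iff hab.symm hξ0 v).mpr hfixv)

end GDDNAux
end


open GDDNAux in
/-- For `w ∈ G(d,d,n)` lying below a Coxeter element `γ` in absolute order,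
`ℓ_T(w) = n - dim Fix(w)` (stated as `ℓ_T(w) + dim Fix(w) = n`). -/
theorem stmt_16 (d n : ℕ) (hd : 2 ≤ d) (hn : 2 ≤ n)
    (γ w : Matrix (Fin n) (Fin n) ℂ)
    (hγ : IsCoxeterElt d n γ) (hw : IsGDDN d n w)
    (hle : refLen d n γ = refLen d n w + refLen d n (w⁻¹ * γ)) :
    refLen d n w + fixDim w = n := by
  obtain ⟨⟨l, hl, hlprod, hllen⟩, hFix⟩ := coxeter_structure hd hn hγ
  have h1 : refLen d n γ ≤ n := refLen_le ⟨l, hl, hlprod, hllen⟩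
  have h2 : n ≤ refLen d n w + fixDim w := refLen_lower (canGen_of_gddn hd hw)
  have hwinv := gddn_inv_aux (by omega : 0 < d) hw
  have hw' : IsGDDN d n (w⁻¹ * γ) := gddn_mul hwinv.1 hγ.1
  have h3 : n ≤ refLen d n (w⁻¹ * γ) + fixDim (w⁻¹ * γ) :=
    refLen_lower (canGen_of_gddn hd hw')
  have hmul : w * (w⁻¹ * γ) = γ := by rw [← mul_assoc, hwinv.2.1, one_mul]
  have hγ0 : fixDim γ = 0 := by
    rw [fixDim_eq, hFix, finrank_bot]
  have h4 : fixDim w + fixDim (w⁻¹ * γ) ≤ n := by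
    have h5 := fixDim_mul w (w⁻¹ * γ)
    rw [hmul, hγ0] at h5
    omega
  omega
end
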